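/- arXiv:1407.6106 — 2 statements merged into one kernel-verified Lean document; each statement's English description precedes it below -/
import Mathlib

section
/- Let φ and φ' be automorphisms of C*-algebras A and B respectively, let π : A → M(B) be a nondegenerate homomorphism, and let v ∈ M(B) be a unitary with vπ(φ(a)) = φ̄'(π(a))v for all a ∈ A, where φ̄' is the strict extension of φ'. Then ψ(a) := vπ(a) defines a nondegenerate correspondence homomorphism (ψ,π) : (A(φ),A) → (M(B(φ')),M(B)). Conversely, every nondegenerate correspondence homomorphism from (A(φ),A) into (M(B(φ')),M(B)) is of this form for a unique such unitary v. -/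
noncomputable section
namespace Paper

universe u

structure CAlg where
  carrier : Type u
  [inst : NonUnitalCStarAlgebra carrier]

attribute [instance] CAlg.inst
instance : CoeSort CAlg.{u} (Type u) := ⟨CAlg.carrier⟩

/-- A bundled right Hilbert C*-module over `A`. -/
structure HMod (A : CAlg.{u}) where
  carrier : Type u
  [instGrp : NormedAddCommGroup carrier]
  [instSp : NormedSpace ℂ carrier]
  [instCpl : CompleteSpace carrier]
  smulR : carrier → A.carrier → carrier
  inn : carrier → carrier → A.carrier
  add_smulR : ∀ x y a, smulR (x + y) a = smulR x a + smulR y a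
  smulR_add : ∀ x a b, smulR x (a + b) = smulR x a + smulR x b
  smulR_mul : ∀ x a b, smulR (smulR x a) b = smulR x (a * b)
  smulR_csmul : ∀ (c : ℂ) x a, smulR (c • x) a = c • smulR x a
  csmul_smulR : ∀ (c : ℂ) x a, smulR x (c • a) = c • smulR x a
  inn_add_right : ∀ x y z, inn x (y + z) = inn x y + inn x z
  inn_csmul_right : ∀ (c : ℂ) x y, inn x (c • y) = c • inn x y
  inn_smulR : ∀ x y a, inn x (smulR y a) = inn x y * a
  inn_star : ∀ x y, star (inn x y) = inn y x
  inn_self_nonneg : ∀ x, ∃ a, inn x x = star a * a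
  norm_eq : ∀ x, ‖x‖ = Real.sqrt ‖inn x x‖
  norm_inn_le : ∀ x y, ‖inn x y‖ ≤ ‖x‖ * ‖y‖
  norm_smulR_le : ∀ x a, ‖smulR x a‖ ≤ ‖x‖ * ‖a‖

attribute [instance] HMod.instGrp HMod.instSp HMod.instCpl
instance {A : CAlg.{u}} : CoeSort (HMod A) (Type u) := ⟨HMod.carrier⟩

/-- A bundled nondegenerate C*-correspondence over `A`. -/
structure Corr (A : CAlg.{u}) extends HMod A where
  lact : A.carrier → carrier → carrier
  lact_add : ∀ a x y, lact a (x + y) = lact a x + lact a y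
  lact_csmul : ∀ a (c : ℂ) x, lact a (c • x) = c • lact a x
  add_lact : ∀ a b x, lact (a + b) x = lact a x + lact b x
  csmul_lact : ∀ (c : ℂ) a x, lact (c • a) x = c • lact a x
  lact_mul : ∀ a b x, lact (a * b) x = lact a (lact b x)
  lact_adjoint : ∀ a x y, inn (lact a x) y = inn x (lact (star a) y)
  lact_smulR : ∀ a x b, lact a (smulR x b) = smulR (lact a x) b
  norm_lact_le : ∀ a x, ‖lact a x‖ ≤ ‖a‖ * ‖x‖
  nondeg : closure (↑(Submodule.span ℂ {z : carrier | ∃ a x, z = lact a x}) : Set carrier)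
      = Set.univ

instance {A : CAlg.{u}} : CoeSort (Corr A) (Type u) := ⟨fun X => X.carrier⟩

namespace Corr

variable {A : CAlg.{u}} (X : Corr A)

/-- The rank-one operator `θ_{m,n} : z ↦ m·⟨n,z⟩` as a continuous linear map. -/
def rankOne (m n : X.carrier) : X.carrier →L[ℂ] X.carrier :=
  LinearMap.mkContinuous
    { toFun := fun z => X.smulR m (X.inn n z)
      map_add' := fun y z => by
        show X.smulR m (X.inn n (y + z)) = X.smulR m (X.inn n y) + X.smulR m (X.inn n z)
        rw [X.inn_add_right, X.smulR_add]
      map_smul' := fun c z => by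
        show X.smulR m (X.inn n (c • z)) = c • X.smulR m (X.inn n z)
        rw [X.inn_csmul_right, X.csmul_smulR] }
    (‖m‖ * ‖n‖)
    (fun z => by
      calc ‖X.smulR m (X.inn n z)‖ ≤ ‖m‖ * ‖X.inn n z‖ := X.norm_smulR_le _ _
        _ ≤ ‖m‖ * (‖n‖ * ‖z‖) := by
              have := X.norm_inn_le n z
              have h0 : (0:ℝ) ≤ ‖m‖ := norm_nonneg m
              nlinarith [norm_nonneg (X.inn n z)]
        _ = ‖m‖ * ‖n‖ * ‖z‖ := by ring)

/-- Closed linear span of the rank-one operators with entries from `E`. -/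
def KSet (E : Set X.carrier) : Set (X.carrier →L[ℂ] X.carrier) :=
  closure (↑(Submodule.span ℂ {T | ∃ m ∈ E, ∃ n ∈ E, T = X.rankOne m n}) :
    Set (X.carrier →L[ℂ] X.carrier))

/-- The set-level Katsura ideal of a sub-correspondence `(E, D)` of `(X, A)`. -/
def subKatsura (E : Set X.carrier) (D : Set A.carrier) : Set A.carrier :=
  {a | a ∈ D ∧ (∃ T ∈ X.KSet E, ∀ z ∈ E, X.lact a z = T z) ∧
    ∀ b ∈ D, (∀ z ∈ E, X.lact b z = 0) → a * b = 0}

end Corr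

/-- Bundled data realizing the compact operators `K(X)` on a correspondence `X`. -/
structure Compacts {A : CAlg.{u}} (X : Corr A) where
  K : CAlg.{u}
  act : K.carrier → X.carrier → X.carrier
  θ : X.carrier → X.carrier → K.carrier
  act_add : ∀ k x y, act k (x + y) = act k x + act k y
  act_csmul : ∀ k (c : ℂ) x, act k (c • x) = c • act k x
  add_act : ∀ k l x, act (k + l) x = act k x + act l x
  csmul_act : ∀ (c : ℂ) k x, act (c • k) x = c • act k x
  act_mul : ∀ k l x, act (k * l) x = act k (act l x)
  act_adjoint : ∀ k x y, X.inn (act k x) y = X.inn x (act (star k) y)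
  act_injective : ∀ k, (∀ x, act k x = 0) → k = 0
  θ_apply : ∀ x y z, act (θ x y) z = X.smulR x (X.inn y z)
  dense : closure (↑(Submodule.span ℂ {k : K.carrier | ∃ x y, k = θ x y}) : Set K.carrier)
      = Set.univ

/-- The Katsura ideal `J_X` of a correspondence. -/
def Jideal {A : CAlg.{u}} {X : Corr A} (𝒦 : Compacts X) : Set A.carrier :=
  {a | (∃ k, ∀ x, 𝒦.act k x = X.lact a x) ∧
    ∀ b, (∀ x, X.lact b x = 0) → a * b = 0}

/-- A representation of `(X, A)` on a C*-algebra `B`, together with the induced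
map `ψ^{(1)}` on compact operators. -/
structure Rep1 {A : CAlg.{u}} {X : Corr A} (𝒦 : Compacts X) (B : CAlg.{u}) where
  ψ : X.carrier → B.carrier
  π : A.carrier →⋆ₙₐ[ℂ] B.carrier
  ψ_add : ∀ x y, ψ (x + y) = ψ x + ψ y
  ψ_csmul : ∀ (c : ℂ) x, ψ (c • x) = c • ψ x
  ψ_lact : ∀ a x, ψ (X.lact a x) = π a * ψ x
  ψ_inn : ∀ x y, (π (X.inn x y) : B.carrier) = star (ψ x) * ψ y
  ψ1 : 𝒦.K.carrier →⋆ₙₐ[ℂ] B.carrier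
  ψ1_θ : ∀ x y, ψ1 (𝒦.θ x y) = ψ x * star (ψ y)

/-- Covariance of a representation. -/
def Rep1.Covariant {A : CAlg.{u}} {X : Corr A} {𝒦 : Compacts X} {B : CAlg.{u}}
    (r : Rep1 𝒦 B) : Prop :=
  ∀ a k, a ∈ Jideal 𝒦 → (∀ x, 𝒦.act k x = X.lact a x) → r.ψ1 k = r.π a

/-- The Cuntz–Pimsner algebra of `(X, A)`: a C*-algebra together with a universal
covariant representation. -/
structure CuntzPimsner {A : CAlg.{u}} {X : Corr A} (𝒦 : Compacts X) where
  O : CAlg.{u}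
  k : Rep1 𝒦 O
  covariant : k.Covariant
  π_injective : Function.Injective k.π
  generated : closure (↑(NonUnitalStarAlgebra.adjoin ℂ (Set.range k.ψ ∪ Set.range k.π)) :
      Set O.carrier) = Set.univ
  lift : ∀ {B : CAlg.{u}} (r : Rep1 𝒦 B), r.Covariant → (O.carrier →⋆ₙₐ[ℂ] B.carrier)
  lift_ψ : ∀ {B : CAlg.{u}} (r : Rep1 𝒦 B) (h : r.Covariant) (x : X.carrier),
      lift r h (k.ψ x) = r.ψ x
  lift_π : ∀ {B : CAlg.{u}} (r : Rep1 𝒦 B) (h : r.Covariant) (a : A.carrier),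
      lift r h (k.π a) = r.π a
  lift_unique : ∀ {B : CAlg.{u}} (r : Rep1 𝒦 B) (h : r.Covariant)
      (g : O.carrier →⋆ₙₐ[ℂ] B.carrier),
      (∀ x, g (k.ψ x) = r.ψ x) → (∀ a, g (k.π a) = r.π a) → g = lift r h


/-- Bundled multiplier algebra `M(A)` of a C*-algebra `A`. -/
structure MulAlg (A : CAlg.{u}) where
  M : CAlg.{u}
  one : M.carrier
  one_mul : ∀ m : M.carrier, one * m = m
  mul_one : ∀ m : M.carrier, m * one = m
  star_one : star one = one
  ι : A.carrier →⋆ₙₐ[ℂ] M.carrier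
  injective : Function.Injective ι
  isometry : ∀ a, ‖ι a‖ = ‖a‖
  ideal_left : ∀ (m : M.carrier) (a : A.carrier), ∃ b, m * ι a = ι b
  ideal_right : ∀ (m : M.carrier) (a : A.carrier), ∃ b, ι a * m = ι b
  essential : ∀ m : M.carrier, (∀ a, m * ι a = 0) → m = 0
  largest : ∀ {D : CAlg.{u}} (j : A.carrier →⋆ₙₐ[ℂ] D.carrier), Function.Injective j →
      (∀ (d : D.carrier) (a : A.carrier), ∃ b, d * j a = j b) →
      (∀ (d : D.carrier) (a : A.carrier), ∃ b, j a * d = j b) →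
      (∀ d : D.carrier, (∀ a, d * j a = 0) → d = 0) →
      ∃ h : D.carrier →⋆ₙₐ[ℂ] M.carrier, ∀ a, h (j a) = ι a

/-- `M(A; I)`, the strict closure of an ideal(-like subset) `I` inside `M(A)`:
the set of multipliers which multiply `A` into `I`. -/
def MulAlg.MI {A : CAlg.{u}} (mA : MulAlg A) (I : Set A.carrier) : Set mA.M.carrier :=
  {m | (∀ a : A.carrier, ∃ b ∈ I, m * mA.ι a = mA.ι b) ∧
       (∀ a : A.carrier, ∃ b ∈ I, mA.ι a * m = mA.ι b)}

/-- The strict extension `π̄ : M(A) → M(B)` of a (nondegenerate) homomorphism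
`π : A → M(B)`. -/
structure StrictExtAlg {A B : CAlg.{u}} (mA : MulAlg A) (mB : MulAlg B)
    (π : A.carrier →⋆ₙₐ[ℂ] mB.M.carrier) where
  bar : mA.M.carrier →⋆ₙₐ[ℂ] mB.M.carrier
  bar_ι : ∀ a, bar (mA.ι a) = π a
  bar_one : bar mA.one = mB.one

/-- Pre-tensor-product data: `C` is a C*-completion of the algebraic tensor
product `A ⊙ B` with respect to some C*-norm. -/
structure CTensorPre (A B C : CAlg.{u}) where
  tmul : A.carrier → B.carrier → C.carrier
  add_tmul : ∀ a a' b, tmul (a + a') b = tmul a b + tmul a' b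
  tmul_add : ∀ a b b', tmul a (b + b') = tmul a b + tmul a b'
  csmul_tmul : ∀ (c : ℂ) a b, tmul (c • a) b = c • tmul a b
  tmul_csmul : ∀ (c : ℂ) a b, tmul a (c • b) = c • tmul a b
  tmul_mul : ∀ a a' b b', tmul a b * tmul a' b' = tmul (a * a') (b * b')
  tmul_star : ∀ a b, star (tmul a b) = tmul (star a) (star b)
  tmul_norm : ∀ a b, ‖tmul a b‖ = ‖a‖ * ‖b‖
  dense : closure (↑(Submodule.span ℂ {z : C.carrier | ∃ a b, z = tmul a b}) : Set C.carrier)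
      = Set.univ

/-- The minimal (spatial) tensor product `A ⊗ B`: the smallest C*-completion of
`A ⊙ B`, i.e. every C*-completion maps onto it. -/
structure CTensor (A B C : CAlg.{u}) extends CTensorPre A B C where
  minimal : ∀ {D : CAlg.{u}} (t : CTensorPre A B D),
      ∃ h : D.carrier →⋆ₙₐ[ℂ] C.carrier, ∀ a b, h (t.tmul a b) = tmul a b

/-- `A` is a nuclear C*-algebra: the C*-norm on `A ⊙ B` is unique for every `B`. -/
def Nuclear (A : CAlg.{u}) : Prop :=
  ∀ (B C D : CAlg.{u}) (t₁ : CTensorPre A B C) (t₂ : CTensorPre A B D),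
    ∃ h : C.carrier →⋆ₙₐ[ℂ] D.carrier, Function.Bijective h ∧
      ∀ a b, h (t₁.tmul a b) = t₂.tmul a b

/-- `A` is an exact C*-algebra: taking the minimal tensor product with `A`
preserves short exact sequences. -/
def Exact (A : CAlg.{u}) : Prop :=
  ∀ (B Q C D : CAlg.{u}) (q : B.carrier →⋆ₙₐ[ℂ] Q.carrier), Function.Surjective q →
    ∀ (t : CTensor B A C) (t' : CTensor Q A D) (h : C.carrier →⋆ₙₐ[ℂ] D.carrier),
      (∀ b a, h (t.tmul b a) = t'.tmul (q b) a) →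
      ∀ c : C.carrier, h c = 0 →
        c ∈ closure (↑(Submodule.span ℂ
          {z : C.carrier | ∃ b a, q b = 0 ∧ z = t.tmul b a}) : Set C.carrier)


/-- The tensor product correspondence `(X ⊗ S, A ⊗ S)` of a correspondence `(X, A)`
with a C*-algebra `S` (exterior tensor product). -/
structure CorrTensor {A : CAlg.{u}} (X : Corr A) (S : CAlg.{u}) {AS : CAlg.{u}}
    (tA : CTensorPre A S AS) where
  Y : Corr AS
  tmul : X.carrier → S.carrier → Y.carrier
  add_tmul : ∀ x x' s, tmul (x + x') s = tmul x s + tmul x' s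
  tmul_add : ∀ x s s', tmul x (s + s') = tmul x s + tmul x s'
  csmul_tmul : ∀ (c : ℂ) x s, tmul (c • x) s = c • tmul x s
  tmul_csmul : ∀ (c : ℂ) x s, tmul x (c • s) = c • tmul x s
  inn_tmul : ∀ x s y t, Y.inn (tmul x s) (tmul y t) = tA.tmul (X.inn x y) (star s * t)
  smulR_tmul : ∀ x s a t, Y.smulR (tmul x s) (tA.tmul a t) = tmul (X.smulR x a) (s * t)
  lact_tmul : ∀ a t x s, Y.lact (tA.tmul a t) (tmul x s) = tmul (X.lact a x) (t * s)
  dense : closure (↑(Submodule.span ℂ {z : Y.carrier | ∃ x s, z = tmul x s}) : Set Y.carrier)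
      = Set.univ

/-- Bundled multiplier correspondence `(M(X), M(A))` of a correspondence `(X, A)`. -/
structure MulCorr {A : CAlg.{u}} (X : Corr A) (mA : MulAlg A) where
  MX : Corr mA.M
  ι : X.carrier → MX.carrier
  ι_add : ∀ x y, ι (x + y) = ι x + ι y
  ι_csmul : ∀ (c : ℂ) x, ι (c • x) = c • ι x
  ι_injective : Function.Injective ι
  ι_isometry : ∀ x, ‖ι x‖ = ‖x‖
  ι_inn : ∀ x y, MX.inn (ι x) (ι y) = mA.ι (X.inn x y)
  ι_smulR : ∀ x a, MX.smulR (ι x) (mA.ι a) = ι (X.smulR x a)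
  ι_lact : ∀ a x, MX.lact (mA.ι a) (ι x) = ι (X.lact a x)
  lact_one : ∀ m : MX.carrier, MX.lact mA.one m = m
  smulR_one : ∀ m : MX.carrier, MX.smulR m mA.one = m
  idealR : ∀ (m : MX.carrier) (a : A.carrier), ∃ x, MX.smulR m (mA.ι a) = ι x
  essential : ∀ m m' : MX.carrier,
      (∀ a, MX.smulR m (mA.ι a) = MX.smulR m' (mA.ι a)) → m = m'

/-- The relative multiplier correspondence `M_C(X)` determined by a set of
multipliers (e.g. `M_{A}(X)` or `M_{A⊗S}(X⊗S)`): those `m ∈ M(X)` multiplying the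
given set into `X`. -/
def MulCorr.MRel {A : CAlg.{u}} {X : Corr A} {mA : MulAlg A} (mX : MulCorr X mA)
    (s : Set mA.M.carrier) : Set mX.MX.carrier :=
  {m | ∀ c ∈ s, mX.MX.lact c m ∈ Set.range mX.ι ∧ mX.MX.smulR m c ∈ Set.range mX.ι}

/-- The `A`-multiplier correspondence `M_A(X) ⊆ M(X)`. -/
def MulCorr.MA {A : CAlg.{u}} {X : Corr A} {mA : MulAlg A} (mX : MulCorr X mA) :
    Set mX.MX.carrier :=
  mX.MRel (Set.range mA.ι)

/-- Strict extension data for a (nondegenerate) correspondence homomorphism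
`(ψ₀, π) : (Y, B) → (M(D), M(D))` to the multiplier correspondence `(M(Y), M(B))`;
the extension `ψbar` is only required to have the extension properties on the
`B`-multiplier correspondence `M_B(Y)`. -/
structure CorrHomExt {B : CAlg.{u}} {Y : Corr B} (mB : MulAlg B) (mY : MulCorr Y mB)
    {D : CAlg.{u}} (mD : MulAlg D)
    (ψ₀ : Y.carrier → mD.M.carrier) (π : B.carrier →⋆ₙₐ[ℂ] mD.M.carrier) where
  πbar : mB.M.carrier →⋆ₙₐ[ℂ] mD.M.carrier
  πbar_ι : ∀ b, πbar (mB.ι b) = π b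
  πbar_one : πbar mB.one = mD.one
  ψbar : mY.MX.carrier → mD.M.carrier
  ψbar_ι : ∀ y, ψbar (mY.ι y) = ψ₀ y
  ψbar_add : ∀ m n, m ∈ mY.MA → n ∈ mY.MA → ψbar (m + n) = ψbar m + ψbar n
  ψbar_csmul : ∀ (c : ℂ) m, m ∈ mY.MA → ψbar (c • m) = c • ψbar m
  ψbar_smulR : ∀ m g, m ∈ mY.MA → ψbar (mY.MX.smulR m g) = ψbar m * πbar g
  ψbar_lact : ∀ g m, m ∈ mY.MA → ψbar (mY.MX.lact g m) = πbar g * ψbar m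
  ψbar_inn : ∀ m n, m ∈ mY.MA → n ∈ mY.MA →
      πbar (mY.MX.inn m n) = star (ψbar m) * ψbar n

/-- A bundled (bisimplifiable) Hopf C*-algebra structure on `S`, with the
comultiplication `Δ : S → M(S⊗S)`, the canonical embeddings `s ↦ s⊗1`, `s ↦ 1⊗s`,
and the coassociativity data on `S⊗S⊗S`. -/
structure HopfStr (S : CAlg.{u}) where
  S2 : CAlg.{u}
  tS : CTensor S S S2
  mS2 : MulAlg S2
  Δ : S.carrier →⋆ₙₐ[ℂ] mS2.M.carrier
  Δ_nondeg : closure (↑(Submodule.span ℂ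
      {z : S2.carrier | ∃ s u, mS2.ι z = Δ s * mS2.ι u}) : Set S2.carrier) = Set.univ
  inl : S.carrier →⋆ₙₐ[ℂ] mS2.M.carrier
  inr : S.carrier →⋆ₙₐ[ℂ] mS2.M.carrier
  inl_spec : ∀ s a b, inl s * mS2.ι (tS.tmul a b) = mS2.ι (tS.tmul (s * a) b)
  inr_spec : ∀ s a b, inr s * mS2.ι (tS.tmul a b) = mS2.ι (tS.tmul a (s * b))
  inl_spec' : ∀ s a b, mS2.ι (tS.tmul a b) * inl s = mS2.ι (tS.tmul (a * s) b)
  inr_spec' : ∀ s a b, mS2.ι (tS.tmul a b) * inr s = mS2.ι (tS.tmul a (b * s))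
  /-- bisimplifiability: `Δ(S)(1⊗S)` spans a dense subspace of `S⊗S` -/
  cancel_right : closure (↑(Submodule.span ℂ
      {z : S2.carrier | ∃ s u, mS2.ι z = Δ s * inr u}) : Set S2.carrier) = Set.univ
  /-- bisimplifiability: `Δ(S)(S⊗1)` spans a dense subspace of `S⊗S` -/
  cancel_left : closure (↑(Submodule.span ℂ
      {z : S2.carrier | ∃ s u, mS2.ι z = Δ s * inl u}) : Set S2.carrier) = Set.univ
  S3 : CAlg.{u}
  t12 : CTensor S2 S S3
  t23 : CTensor S S2 S3
  t_assoc : ∀ a b c, t12.tmul (tS.tmul a b) c = t23.tmul a (tS.tmul b c)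
  mS3 : MulAlg S3
  /-- the strict extension of `Δ ⊗ id_S` to `M(S⊗S)` -/
  Δid : mS2.M.carrier →⋆ₙₐ[ℂ] mS3.M.carrier
  Δid_one : Δid mS2.one = mS3.one
  Δid_spec : ∀ (b c : S.carrier) (z y : S2.carrier) (u : S.carrier),
      Δ b * mS2.ι z = mS2.ι y →
      Δid (mS2.ι (tS.tmul b c)) * mS3.ι (t12.tmul z u) = mS3.ι (t12.tmul y (c * u))
  /-- the strict extension of `id_S ⊗ Δ` to `M(S⊗S)` -/
  idΔ : mS2.M.carrier →⋆ₙₐ[ℂ] mS3.M.carrier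
  idΔ_one : idΔ mS2.one = mS3.one
  idΔ_spec : ∀ (a b : S.carrier) (c : S.carrier) (z y : S2.carrier),
      Δ b * mS2.ι z = mS2.ι y →
      idΔ (mS2.ι (tS.tmul a b)) * mS3.ι (t23.tmul c z) = mS3.ι (t23.tmul (a * c) y)
  /-- coassociativity -/
  coassoc : ∀ s, Δid (Δ s) = idΔ (Δ s)

/-- Coaction data of a Hopf C*-algebra `(S, Δ)` on a C*-algebra `A`, for a given
homomorphism `δ : A → M(A⊗S)` (so that one can say "`δ` is a coaction"):
nondegeneracy, coaction nondegeneracy, and the coaction identity. -/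
structure AlgCoactAux {S : CAlg.{u}} (hS : HopfStr S) (A : CAlg.{u}) {AS : CAlg.{u}}
    (tA : CTensor A S AS) (mAS : MulAlg AS)
    (δ : A.carrier →⋆ₙₐ[ℂ] mAS.M.carrier) where
  /-- the canonical embedding `s ↦ 1_{M(A)} ⊗ s` of `S` into `M(A⊗S)` -/
  inrS : S.carrier →⋆ₙₐ[ℂ] mAS.M.carrier
  inrS_spec : ∀ s a u, inrS s * mAS.ι (tA.tmul a u) = mAS.ι (tA.tmul a (s * u))
  inrS_spec' : ∀ s a u, mAS.ι (tA.tmul a u) * inrS s = mAS.ι (tA.tmul a (u * s))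
  /-- `δ` is nondegenerate as a homomorphism into `M(A⊗S)` -/
  nondeg : closure (↑(Submodule.span ℂ
      {z : AS.carrier | ∃ a w, mAS.ι z = δ a * mAS.ι w}) : Set AS.carrier) = Set.univ
  /-- coaction nondegeneracy: `δ(A)(1⊗S)` spans a dense subspace of `A⊗S` -/
  coact_nondeg : closure (↑(Submodule.span ℂ
      {z : AS.carrier | ∃ a s, mAS.ι z = δ a * inrS s}) : Set AS.carrier) = Set.univ
  AS2 : CAlg.{u}
  /-- `(A⊗S)⊗S` -/
  tAS2 : CTensor AS S AS2
  /-- `A⊗(S⊗S)` -/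
  tA23 : CTensor A hS.S2 AS2
  t_assoc : ∀ a s u, tAS2.tmul (tA.tmul a s) u = tA23.tmul a (hS.tS.tmul s u)
  mAS2 : MulAlg AS2
  /-- the strict extension of `δ ⊗ id_S` to `M(A⊗S)` -/
  δid : mAS.M.carrier →⋆ₙₐ[ℂ] mAS2.M.carrier
  δid_one : δid mAS.one = mAS2.one
  δid_spec : ∀ (a : A.carrier) (s : S.carrier) (z y : AS.carrier) (u : S.carrier),
      δ a * mAS.ι z = mAS.ι y →
      δid (mAS.ι (tA.tmul a s)) * mAS2.ι (tAS2.tmul z u) = mAS2.ι (tAS2.tmul y (s * u))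
  /-- the strict extension of `id_A ⊗ Δ` to `M(A⊗S)` -/
  idΔ : mAS.M.carrier →⋆ₙₐ[ℂ] mAS2.M.carrier
  idΔ_one : idΔ mAS.one = mAS2.one
  idΔ_spec : ∀ (a : A.carrier) (s : S.carrier) (c : A.carrier) (z y : hS.S2.carrier),
      hS.Δ s * hS.mS2.ι z = hS.mS2.ι y →
      idΔ (mAS.ι (tA.tmul a s)) * mAS2.ι (tA23.tmul c z) = mAS2.ι (tA23.tmul (a * c) y)
  /-- the coaction identity `(δ̄⊗id)∘δ = (id⊗Δ̄)∘δ` -/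
  coaction_identity : ∀ a, δid (δ a) = idΔ (δ a)

/-- A coaction of the Hopf C*-algebra `(S, Δ)` on the C*-algebra `A`, bundled. -/
structure AlgCoaction {S : CAlg.{u}} (hS : HopfStr S) (A : CAlg.{u}) where
  AS : CAlg.{u}
  tA : CTensor A S AS
  mAS : MulAlg AS
  δ : A.carrier →⋆ₙₐ[ℂ] mAS.M.carrier
  aux : AlgCoactAux hS A tA mAS δ

/-- Coaction data of a Hopf C*-algebra `(S, Δ)` on a nondegenerate C*-correspondence
`(X, A)`, for given maps `σ : X → M(X⊗S)` and a given coaction `δ` of `S` on `A`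
(standing for "`(σ, δ)` is a coaction of `S` on `(X, A)`"). -/
structure CorrCoactAux {S : CAlg.{u}} (hS : HopfStr S) {A : CAlg.{u}} (X : Corr A)
    (ac : AlgCoaction hS A) (XS : CorrTensor X S ac.tA.toCTensorPre)
    (mXS : MulCorr XS.Y ac.mAS) (σ : X.carrier → mXS.MX.carrier) where
  σ_add : ∀ x y, σ (x + y) = σ x + σ y
  σ_csmul : ∀ (c : ℂ) x, σ (c • x) = c • σ x
  /-- `(σ, δ)` is a correspondence homomorphism: compatibility with the left actions -/
  σ_lact : ∀ a x, mXS.MX.lact (ac.δ a) (σ x) = σ (X.lact a x)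
  /-- `(σ, δ)` is a correspondence homomorphism: compatibility with inner products -/
  σ_inn : ∀ x y, mXS.MX.inn (σ x) (σ y) = ac.δ (X.inn x y)
  /-- nondegeneracy: `σ(X)·(A⊗S)` spans a dense subspace of `X⊗S` -/
  nondeg : closure (↑(Submodule.span ℂ
      {z : XS.Y.carrier | ∃ x f, mXS.ι z = mXS.MX.smulR (σ x) (ac.mAS.ι f)}) :
      Set XS.Y.carrier) = Set.univ
  /-- coaction nondegeneracy: `φ_{M(A⊗S)}(1⊗S)·σ(X)` spans a dense subspace of `X⊗S` -/
  coact_nondeg : closure (↑(Submodule.span ℂ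
      {z : XS.Y.carrier | ∃ x s, mXS.ι z = mXS.MX.lact (ac.aux.inrS s) (σ x)}) :
      Set XS.Y.carrier) = Set.univ
  /-- `(X⊗S)⊗S` as a correspondence over `(A⊗S)⊗S` -/
  XS2 : CorrTensor XS.Y S ac.aux.tAS2.toCTensorPre
  /-- the map `X × (S⊗S) → X⊗S⊗S` -/
  tmul23 : X.carrier → hS.S2.carrier → XS2.Y.carrier
  tmul23_assoc : ∀ x s u, XS2.tmul (XS.tmul x s) u = tmul23 x (hS.tS.tmul s u)
  mXS2 : MulCorr XS2.Y ac.aux.mAS2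
  /-- the strict extension of `σ ⊗ id_S` to `M(X⊗S)` -/
  σid : mXS.MX.carrier → mXS2.MX.carrier
  σid_add : ∀ m n, σid (m + n) = σid m + σid n
  σid_csmul : ∀ (c : ℂ) m, σid (c • m) = c • σid m
  σid_smulR : ∀ m g, σid (mXS.MX.smulR m g) = mXS2.MX.smulR (σid m) (ac.aux.δid g)
  σid_inn : ∀ m n, mXS2.MX.inn (σid m) (σid n) = ac.aux.δid (mXS.MX.inn m n)
  σid_spec : ∀ (x : X.carrier) (s : S.carrier) (f : ac.AS.carrier) (u : S.carrier)
      (w : XS.Y.carrier),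
      mXS.MX.smulR (σ x) (ac.mAS.ι f) = mXS.ι w →
      mXS2.MX.smulR (σid (mXS.ι (XS.tmul x s))) (ac.aux.mAS2.ι (ac.aux.tAS2.tmul f u))
        = mXS2.ι (XS2.tmul w (s * u))
  /-- the strict extension of `id_X ⊗ Δ` to `M(X⊗S)` -/
  idΔX : mXS.MX.carrier → mXS2.MX.carrier
  idΔX_add : ∀ m n, idΔX (m + n) = idΔX m + idΔX n
  idΔX_csmul : ∀ (c : ℂ) m, idΔX (c • m) = c • idΔX m
  idΔX_smulR : ∀ m g, idΔX (mXS.MX.smulR m g) = mXS2.MX.smulR (idΔX m) (ac.aux.idΔ g)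
  idΔX_inn : ∀ m n, mXS2.MX.inn (idΔX m) (idΔX n) = ac.aux.idΔ (mXS.MX.inn m n)
  idΔX_spec : ∀ (x : X.carrier) (s : S.carrier) (c : A.carrier) (z y : hS.S2.carrier),
      hS.Δ s * hS.mS2.ι z = hS.mS2.ι y →
      mXS2.MX.smulR (idΔX (mXS.ι (XS.tmul x s))) (ac.aux.mAS2.ι (ac.aux.tA23.tmul c z))
        = mXS2.ι (tmul23 (X.smulR x c) y)
  /-- the coaction identity `(σ̄⊗id)∘σ = (id⊗Δ̄)∘σ` -/
  coaction_identity : ∀ x, σid (σ x) = idΔX (σ x)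

/-- A coaction of a Hopf C*-algebra `(S, Δ)` on a nondegenerate C*-correspondence
`(X, A)`, bundled. -/
structure CorrCoaction {S : CAlg.{u}} (hS : HopfStr S) {A : CAlg.{u}} (X : Corr A) where
  ac : AlgCoaction hS A
  XS : CorrTensor X S ac.tA.toCTensorPre
  mXS : MulCorr XS.Y ac.mAS
  σ : X.carrier → mXS.MX.carrier
  aux : CorrCoactAux hS X ac XS mXS σ

/-- The closed ideal `J ⊗ S` of `A ⊗ S` generated by elementary tensors from an
ideal `J` of `A`. -/
def tensIdeal {A S AS : CAlg.{u}} (tA : CTensorPre A S AS) (J : Set A.carrier) :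
    Set AS.carrier :=
  closure (↑(Submodule.span ℂ {z : AS.carrier | ∃ a ∈ J, ∃ s, z = tA.tmul a s}) :
    Set AS.carrier)

/-- Weak `δ`-invariance of the ideal `J_X`: `δ(J_X)(1⊗S) ⊆ J_X ⊗ S`. -/
def WeaklyInvariant {S : CAlg.{u}} {hS : HopfStr S} {A : CAlg.{u}} {X : Corr A}
    (cc : CorrCoaction hS X) (𝒦 : Compacts X) : Prop :=
  ∀ a ∈ Jideal 𝒦, ∀ s : S.carrier,
    ∃ z ∈ tensIdeal cc.ac.tA.toCTensorPre (Jideal 𝒦),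
      cc.ac.δ a * cc.ac.aux.inrS s = cc.ac.mAS.ι z

/-- The Hilbert-space kernel of a multiplicative unitary: a Hilbert space `H`,
its Hilbert tensor square `H2 = H⊗H` and cube `H3`, the flip, and a
multiplicative unitary `V` on `H⊗H` satisfying the pentagonal relation. -/
structure MUKernel where
  H : Type u
  [instH1 : NormedAddCommGroup H]
  [instH2 : InnerProductSpace ℂ H]
  [instH3 : CompleteSpace H]
  H2 : Type u
  [instK1 : NormedAddCommGroup H2]
  [instK2 : InnerProductSpace ℂ H2]
  [instK3 : CompleteSpace H2]
  tp : H → H → H2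
  tp_add_left : ∀ x x' y, tp (x + x') y = tp x y + tp x' y
  tp_add_right : ∀ x y y', tp x (y + y') = tp x y + tp x y'
  tp_smul_left : ∀ (c : ℂ) x y, tp (c • x) y = c • tp x y
  tp_smul_right : ∀ (c : ℂ) x y, tp x (c • y) = c • tp x y
  tp_inner : ∀ x y x' y', (inner ℂ (tp x y) (tp x' y') : ℂ) = inner ℂ x x' * inner ℂ y y'
  tp_norm : ∀ x y, ‖tp x y‖ = ‖x‖ * ‖y‖
  tp_dense : closure (↑(Submodule.span ℂ {z : H2 | ∃ x y, z = tp x y}) : Set H2) = Set.univ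
  /-- the flip `Σ` on `H⊗H` -/
  flip : H2 →L[ℂ] H2
  flip_spec : ∀ x y, flip (tp x y) = tp y x
  /-- the multiplicative unitary -/
  V : H2 →L[ℂ] H2
  V_unitary_left : ContinuousLinearMap.adjoint V * V = 1
  V_unitary_right : V * ContinuousLinearMap.adjoint V = 1
  H3 : Type u
  [instL1 : NormedAddCommGroup H3]
  [instL2 : InnerProductSpace ℂ H3]
  [instL3 : CompleteSpace H3]
  j12 : H2 → H → H3
  j23 : H → H2 → H3
  j_assoc : ∀ x y z, j12 (tp x y) z = j23 x (tp y z)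
  V12 : H3 →L[ℂ] H3
  V13 : H3 →L[ℂ] H3
  V23 : H3 →L[ℂ] H3
  Sig23 : H3 →L[ℂ] H3
  V12_spec : ∀ u z, V12 (j12 u z) = j12 (V u) z
  V23_spec : ∀ x u, V23 (j23 x u) = j23 x (V u)
  Sig23_spec : ∀ x y z, Sig23 (j23 x (tp y z)) = j23 x (tp z y)
  V13_def : V13 = Sig23 * V12 * Sig23
  /-- the pentagonal relation `V₁₂V₁₃V₂₃ = V₂₃V₁₂` -/
  pentagon : V12 * V13 * V23 = V23 * V12

attribute [instance] MUKernel.instH1 MUKernel.instH2 MUKernel.instH3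
  MUKernel.instK1 MUKernel.instK2 MUKernel.instK3
  MUKernel.instL1 MUKernel.instL2 MUKernel.instL3

namespace MUKernel

variable (W : MUKernel.{u})

/-- `y ↦ x ⊗ y` as a continuous linear map `H → H⊗H`. -/
def tpL (x : W.H) : W.H →L[ℂ] W.H2 :=
  LinearMap.mkContinuous
    { toFun := fun y => W.tp x y
      map_add' := W.tp_add_right x
      map_smul' := fun c y => by simpa using W.tp_smul_right c x y }
    ‖x‖ (fun y => le_of_eq (by show ‖W.tp x y‖ = ‖x‖ * ‖y‖; exact W.tp_norm x y))

/-- `x ↦ x ⊗ y` as a continuous linear map `H → H⊗H`. -/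
def tpR (y : W.H) : W.H →L[ℂ] W.H2 :=
  LinearMap.mkContinuous
    { toFun := fun x => W.tp x y
      map_add' := fun x x' => W.tp_add_left x x' y
      map_smul' := fun c x => by simpa using W.tp_smul_left c x y }
    ‖y‖ (fun x => le_of_eq (by show ‖W.tp x y‖ = ‖y‖ * ‖x‖; rw [W.tp_norm]; ring))

/-- the slice `(ω_{x,y} ⊗ id)(V)` of `V` by a vector functional in the first leg. -/
def sliceFst (x y : W.H) : W.H →L[ℂ] W.H :=
  (ContinuousLinearMap.adjoint (W.tpL x)).comp (W.V.comp (W.tpL y))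

/-- the slice `(id ⊗ ω_{x,y})(V)` of `V` by a vector functional in the second leg. -/
def sliceSnd (x y : W.H) : W.H →L[ℂ] W.H :=
  (ContinuousLinearMap.adjoint (W.tpR x)).comp (W.V.comp (W.tpR y))

/-- the slice `(id ⊗ ω_{x,y})(ΣV)`, used in the regularity condition. -/
def sliceSndSigV (x y : W.H) : W.H →L[ℂ] W.H :=
  (ContinuousLinearMap.adjoint (W.tpR x)).comp ((W.flip.comp W.V).comp (W.tpR y))

end MUKernel

/-- A well-behaved multiplicative unitary `V` (acting on `H⊗H`), together with its
reduced Hopf C*-algebra `S = S_V`, the dual reduced Hopf C*-algebra `Ŝ = Ŝ_V`,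
the algebra `𝒦 = K(H)` of compact operators with `M(𝒦) = B(H)`, and the
compatibility of the comultiplications with `V`. -/
structure ReducedMU extends MUKernel.{u} where
  /-- the C*-algebra `𝒦 = K(H)` -/
  𝒦 : CAlg.{u}
  m𝒦 : MulAlg 𝒦
  /-- the realization `M(𝒦) ≅ B(H)` -/
  ρ : m𝒦.M.carrier →⋆ₙₐ[ℂ] (H →L[ℂ] H)
  ρ_bijective : Function.Bijective ρ
  ρ_one : ρ m𝒦.one = 1
  ρ_compacts : Set.range (fun k : 𝒦.carrier => ρ (m𝒦.ι k))
      = {T : H →L[ℂ] H | IsCompactOperator ⇑T}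
  /-- the reduced Hopf C*-algebra `S = S_V` -/
  S : CAlg.{u}
  /-- the dual reduced Hopf C*-algebra `Ŝ = Ŝ_V` -/
  Sh : CAlg.{u}
  hS : HopfStr S
  hSh : HopfStr Sh
  ιS : S.carrier →⋆ₙₐ[ℂ] m𝒦.M.carrier
  ιSh : Sh.carrier →⋆ₙₐ[ℂ] m𝒦.M.carrier
  ιS_injective : Function.Injective ιS
  ιSh_injective : Function.Injective ιSh
  ιS_nondeg : closure (↑(Submodule.span ℂ
      {k : 𝒦.carrier | ∃ s k', m𝒦.ι k = ιS s * m𝒦.ι k'}) : Set 𝒦.carrier) = Set.univ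
  ιSh_nondeg : closure (↑(Submodule.span ℂ
      {k : 𝒦.carrier | ∃ x k', m𝒦.ι k = ιSh x * m𝒦.ι k'}) : Set 𝒦.carrier) = Set.univ
  /-- `S_V` is the norm closure of the slices `(ω ⊗ id)(V)`, `ω ∈ L(H)_*` -/
  S_slices : Set.range (fun s : S.carrier => ρ (ιS s))
      = closure (↑(Submodule.span ℂ
          {T : H →L[ℂ] H | ∃ x y, T = toMUKernel.sliceFst x y}) : Set (H →L[ℂ] H))
  /-- `Ŝ_V` is the norm closure of the slices `(id ⊗ ω)(V)`, `ω ∈ L(H)_*` -/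
  Sh_slices : Set.range (fun x : Sh.carrier => ρ (ιSh x))
      = closure (↑(Submodule.span ℂ
          {T : H →L[ℂ] H | ∃ x y, T = toMUKernel.sliceSnd x y}) : Set (H →L[ℂ] H))
  /-- the tensor product of operators on `H⊗H` -/
  tmulB : (H →L[ℂ] H) → (H →L[ℂ] H) → (H2 →L[ℂ] H2)
  tmulB_spec : ∀ R T x y, tmulB R T (tp x y) = tp (R x) (T y)
  /-- the realization of `M(S⊗S)` on `H⊗H` -/
  ρ2S : hS.mS2.M.carrier →⋆ₙₐ[ℂ] (H2 →L[ℂ] H2)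
  ρ2S_ι : ∀ s u, ρ2S (hS.mS2.ι (hS.tS.tmul s u)) = tmulB (ρ (ιS s)) (ρ (ιS u))
  /-- well-behavedness: `Δ_V(s) = V (s⊗1) V*` -/
  ΔV : ∀ s, ρ2S (hS.Δ s) = V * tmulB (ρ (ιS s)) 1 * ContinuousLinearMap.adjoint V
  ρ2Sh : hSh.mS2.M.carrier →⋆ₙₐ[ℂ] (H2 →L[ℂ] H2)
  ρ2Sh_ι : ∀ x y, ρ2Sh (hSh.mS2.ι (hSh.tS.tmul x y)) = tmulB (ρ (ιSh x)) (ρ (ιSh y))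
  /-- well-behavedness: `Δ̂_V(x) = V* (1⊗x) V` -/
  ΔhV : ∀ x, ρ2Sh (hSh.Δ x) = ContinuousLinearMap.adjoint V * tmulB 1 (ρ (ιSh x)) * V

/-- Regularity of the multiplicative unitary (Baaj–Skandalis):
the slices `(id⊗ω)(ΣV)` span a dense subspace of `K(H)`. -/
def ReducedMU.Regular (W : ReducedMU.{u}) : Prop :=
  closure (↑(Submodule.span ℂ
      {T : W.H →L[ℂ] W.H | ∃ x y, T = W.toMUKernel.sliceSndSigV x y}) :
      Set (W.H →L[ℂ] W.H))
    = {T : W.H →L[ℂ] W.H | IsCompactOperator ⇑T}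

/-- Amenability of the multiplicative unitary in the sense of Baaj–Skandalis,
expressed by the existence of a bounded counit on the reduced algebra `S_V`. -/
def ReducedMU.Amenable (W : ReducedMU.{u}) : Prop :=
  ∃ (ε : W.S.carrier →⋆ₙₐ[ℂ] ℂ) (sl : W.hS.S2.carrier → W.S.carrier),
    (∀ z w, sl (z + w) = sl z + sl w) ∧
    (∀ (c : ℂ) z, sl (c • z) = c • sl z) ∧
    (∀ s u, sl (W.hS.tS.tmul s u) = ε s • u) ∧
    ε ≠ 0 ∧
    ∀ s u z, W.hS.Δ s * W.hS.inr u = W.hS.mS2.ι z → sl z = s * u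

/-- Ambient data for the reduced crossed products of a coaction `(σ, δ)` of the
reduced Hopf C*-algebra `S = S_V` on a correspondence `(X, A)`:
the tensor products `A⊗𝒦`, `X⊗𝒦`, their multiplier correspondence, the canonical
embeddings, and the strict extensions `δ_ι = (id⊗ι_S)‾∘δ`, `σ_ι = (id⊗ι_S)‾∘σ`. -/
structure CrossedSetup (W : ReducedMU.{u}) {A : CAlg.{u}} {X : Corr A}
    (cc : CorrCoaction W.hS X) where
  AK : CAlg.{u}
  tAK : CTensor A W.𝒦 AK
  mAK : MulAlg AK
  XK : CorrTensor X W.𝒦 tAK.toCTensorPre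
  mXK : MulCorr XK.Y mAK
  /-- the embedding `m ↦ 1_{M(A)} ⊗ m` of `M(𝒦)` into `M(A⊗𝒦)` -/
  inK : W.m𝒦.M.carrier →⋆ₙₐ[ℂ] mAK.M.carrier
  inK_one : inK W.m𝒦.one = mAK.one
  inK_spec : ∀ (m : W.m𝒦.M.carrier) (a : A.carrier) (k k' : W.𝒦.carrier),
      m * W.m𝒦.ι k = W.m𝒦.ι k' →
      inK m * mAK.ι (tAK.tmul a k) = mAK.ι (tAK.tmul a k')
  inK_spec' : ∀ (m : W.m𝒦.M.carrier) (a : A.carrier) (k k' : W.𝒦.carrier),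
      W.m𝒦.ι k * m = W.m𝒦.ι k' →
      mAK.ι (tAK.tmul a k) * inK m = mAK.ι (tAK.tmul a k')
  /-- the embedding `a ↦ a ⊗ 1` of `A` into `M(A⊗𝒦)` -/
  inA : A.carrier →⋆ₙₐ[ℂ] mAK.M.carrier
  inA_spec : ∀ a b k, inA a * mAK.ι (tAK.tmul b k) = mAK.ι (tAK.tmul (a * b) k)
  /-- the strict extension `(id_A ⊗ ι_S)‾ : M(A⊗S) → M(A⊗𝒦)` -/
  ιAext : cc.ac.mAS.M.carrier →⋆ₙₐ[ℂ] mAK.M.carrier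
  ιAext_one : ιAext cc.ac.mAS.one = mAK.one
  ιAext_spec : ∀ a s, ιAext (cc.ac.mAS.ι (cc.ac.tA.tmul a s)) = inA a * inK (W.ιS s)
  /-- the strict extension `(id_X ⊗ ι_S)‾ : M(X⊗S) → M(X⊗𝒦)` -/
  ιXext : cc.mXS.MX.carrier → mXK.MX.carrier
  ιXext_add : ∀ m n, ιXext (m + n) = ιXext m + ιXext n
  ιXext_csmul : ∀ (c : ℂ) m, ιXext (c • m) = c • ιXext m
  ιXext_smulR : ∀ m g, ιXext (cc.mXS.MX.smulR m g) = mXK.MX.smulR (ιXext m) (ιAext g)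
  ιXext_lact : ∀ g m, ιXext (cc.mXS.MX.lact g m) = mXK.MX.lact (ιAext g) (ιXext m)
  ιXext_inn : ∀ m n, mXK.MX.inn (ιXext m) (ιXext n) = ιAext (cc.mXS.MX.inn m n)
  ιXext_spec : ∀ (x : X.carrier) (s : W.S.carrier) (b : A.carrier) (k k' : W.𝒦.carrier),
      W.ιS s * W.m𝒦.ι k = W.m𝒦.ι k' →
      mXK.MX.smulR (ιXext (cc.mXS.ι (cc.XS.tmul x s))) (mAK.ι (tAK.tmul b k))
        = mXK.ι (XK.tmul (X.smulR x b) k')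

namespace CrossedSetup

variable {W : ReducedMU.{u}} {A : CAlg.{u}} {X : Corr A} {cc : CorrCoaction W.hS X}
variable (cs : CrossedSetup W cc)

/-- `δ_ι = (id_A ⊗ ι_S)‾ ∘ δ : A → M(A⊗𝒦)`. -/
def δι (a : A.carrier) : cs.mAK.M.carrier := cs.ιAext (cc.ac.δ a)

/-- `σ_ι = (id_X ⊗ ι_S)‾ ∘ σ : X → M(X⊗𝒦)`. -/
def σι (x : X.carrier) : cs.mXK.MX.carrier := cs.ιXext (cc.σ x)

/-- The reduced crossed product `A ⋊_δ Ŝ`: the closed linear span of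
`δ_ι(A)(1 ⊗ Ŝ)` inside `M(A⊗𝒦)`. -/
def CPA : Set cs.mAK.M.carrier :=
  closure (↑(Submodule.span ℂ
    {m : cs.mAK.M.carrier | ∃ a x, m = cs.δι a * cs.inK (W.ιSh x)}) :
    Set cs.mAK.M.carrier)

/-- The reduced crossed product `X ⋊_σ Ŝ`: the closed linear span of
`σ_ι(X)·(1 ⊗ Ŝ)` inside `M(X⊗𝒦)`. -/
def CPX : Set cs.mXK.MX.carrier :=
  closure (↑(Submodule.span ℂ
    {m : cs.mXK.MX.carrier | ∃ ξ x, m = cs.mXK.MX.smulR (cs.σι ξ) (cs.inK (W.ιSh x))}) :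
    Set cs.mXK.MX.carrier)

/-- The Katsura ideal `J_{X⋊_σŜ}` of the reduced crossed product correspondence. -/
def Jcp : Set cs.mAK.M.carrier := cs.mXK.MX.subKatsura cs.CPX cs.CPA

end CrossedSetup

/-- Data for the induced coaction `ζ` on the Cuntz–Pimsner algebra `O_X` and the
canonical representation `(k_X ⋊_σ id, k_A ⋊_δ id)` of `(X⋊_σŜ, A⋊_δŜ)` inside
`M(O_X ⊗ 𝒦)`, obtained from the strict extensions `((k_X⊗id_𝒦)‾, (k_A⊗id_𝒦)‾)`. -/
structure CrossedRep (W : ReducedMU.{u}) {A : CAlg.{u}} {X : Corr A}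
    (cc : CorrCoaction W.hS X) (𝒦X : Compacts X) (CP : CuntzPimsner 𝒦X)
    (cs : CrossedSetup W cc) where
  /-- `O_X ⊗ S` -/
  OS : CAlg.{u}
  tOS : CTensor CP.O W.S OS
  mOS : MulAlg OS
  /-- `k_A ⊗ id_S : A⊗S → O_X⊗S` -/
  kAS : cc.ac.AS.carrier →⋆ₙₐ[ℂ] OS.carrier
  kAS_spec : ∀ a s, kAS (cc.ac.tA.tmul a s) = tOS.tmul (CP.k.π a) s
  /-- the strict extension `(k_A⊗id_S)‾ : M(A⊗S) → M(O_X⊗S)` -/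
  kASbar : StrictExtAlg cc.ac.mAS mOS ((mOS.ι).comp kAS)
  /-- `k_X ⊗ id_S : X⊗S → O_X⊗S` -/
  kXS : cc.XS.Y.carrier → OS.carrier
  kXS_spec : ∀ x s, kXS (cc.XS.tmul x s) = tOS.tmul (CP.k.ψ x) s
  /-- the strict extension `(k_X⊗id_S)‾ : M_{A⊗S}(X⊗S) → M_{A⊗S}(O_X⊗S)` -/
  extS : CorrHomExt cc.ac.mAS cc.mXS mOS (fun z => mOS.ι (kXS z)) ((mOS.ι).comp kAS)
  /-- the induced coaction `ζ` of `S` on `O_X` -/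
  ζ : CP.O.carrier →⋆ₙₐ[ℂ] mOS.M.carrier
  ζ_π : ∀ a, ζ (CP.k.π a) = kASbar.bar (cc.ac.δ a)
  ζ_ψ : ∀ x, ζ (CP.k.ψ x) = extS.ψbar (cc.σ x)
  ζ_coaction : AlgCoactAux W.hS CP.O tOS mOS ζ
  /-- `O_X ⊗ 𝒦` -/
  OK : CAlg.{u}
  tOK : CTensor CP.O W.𝒦 OK
  mOK : MulAlg OK
  inKO : W.m𝒦.M.carrier →⋆ₙₐ[ℂ] mOK.M.carrier
  inKO_one : inKO W.m𝒦.one = mOK.one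
  inKO_spec : ∀ (m : W.m𝒦.M.carrier) (c : CP.O.carrier) (k k' : W.𝒦.carrier),
      m * W.m𝒦.ι k = W.m𝒦.ι k' →
      inKO m * mOK.ι (tOK.tmul c k) = mOK.ι (tOK.tmul c k')
  inO : CP.O.carrier →⋆ₙₐ[ℂ] mOK.M.carrier
  inO_spec : ∀ c c' k, inO c * mOK.ι (tOK.tmul c' k) = mOK.ι (tOK.tmul (c * c') k)
  /-- the strict extension `(id_{O_X} ⊗ ι_S)‾ : M(O_X⊗S) → M(O_X⊗𝒦)` -/
  ιOext : mOS.M.carrier →⋆ₙₐ[ℂ] mOK.M.carrier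
  ιOext_one : ιOext mOS.one = mOK.one
  ιOext_spec : ∀ c s, ιOext (mOS.ι (tOS.tmul c s)) = inO c * inKO (W.ιS s)
  /-- `k_A ⊗ id_𝒦 : A⊗𝒦 → O_X⊗𝒦` -/
  kAK : cs.AK.carrier →⋆ₙₐ[ℂ] OK.carrier
  kAK_spec : ∀ a k, kAK (cs.tAK.tmul a k) = tOK.tmul (CP.k.π a) k
  /-- `k_X ⊗ id_𝒦 : X⊗𝒦 → O_X⊗𝒦` -/
  kXK : cs.XK.Y.carrier → OK.carrier
  kXK_spec : ∀ x k, kXK (cs.XK.tmul x k) = tOK.tmul (CP.k.ψ x) k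
  /-- the strict extensions `((k_X⊗id_𝒦)‾, (k_A⊗id_𝒦)‾)` on the
  `(A⊗𝒦)`-multiplier correspondence -/
  extK : CorrHomExt cs.mAK cs.mXK mOK (fun z => mOK.ι (kXK z)) ((mOK.ι).comp kAK)
  /-- the map `ψ^{(1)}` induced on `K(X⋊_σŜ)` by the representation
  `(k_X⋊_σ id, k_A⋊_δ id)` -/
  ψ1 : (cs.mXK.MX.carrier →L[ℂ] cs.mXK.MX.carrier) → mOK.M.carrier
  ψ1_add : ∀ T T', T ∈ cs.mXK.MX.KSet cs.CPX → T' ∈ cs.mXK.MX.KSet cs.CPX →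
      ψ1 (T + T') = ψ1 T + ψ1 T'
  ψ1_csmul : ∀ (c : ℂ) T, T ∈ cs.mXK.MX.KSet cs.CPX → ψ1 (c • T) = c • ψ1 T
  ψ1_cont : ContinuousOn ψ1 (cs.mXK.MX.KSet cs.CPX)
  ψ1_θ : ∀ m n, m ∈ cs.CPX → n ∈ cs.CPX →
      ψ1 (cs.mXK.MX.rankOne m n) = extK.ψbar m * star (extK.ψbar n)

namespace CrossedRep

variable {W : ReducedMU.{u}} {A : CAlg.{u}} {X : Corr A} {cc : CorrCoaction W.hS X}
  {𝒦X : Compacts X} {CP : CuntzPimsner 𝒦X} {cs : CrossedSetup W cc}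
  (cr : CrossedRep W cc 𝒦X CP cs)

/-- `ζ_ι = (id_{O_X} ⊗ ι_S)‾ ∘ ζ`. -/
def ζι (c : CP.O.carrier) : cr.mOK.M.carrier := cr.ιOext (cr.ζ c)

/-- The reduced crossed product `O_X ⋊_ζ Ŝ` as a subset of `M(O_X⊗𝒦)`. -/
def CPO : Set cr.mOK.M.carrier :=
  closure (↑(Submodule.span ℂ
    {m : cr.mOK.M.carrier | ∃ c x, m = cr.ζι c * cr.inKO (W.ιSh x)}) :
    Set cr.mOK.M.carrier)

/-- Covariance of the representation `(k_X⋊_σ id, k_A⋊_δ id)` of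
`(X⋊_σŜ, A⋊_δŜ)` on `O_X⋊_ζŜ`. -/
def Covariant : Prop :=
  ∀ c ∈ cs.Jcp, ∀ T ∈ cs.mXK.MX.KSet cs.CPX,
    (∀ z ∈ cs.CPX, cs.mXK.MX.lact c z = T z) → cr.ψ1 T = cr.extK.πbar c

end CrossedRep

/-- A representation of a set-level sub-correspondence `(E, D)` of `(Y, B)`
on a C*-algebra `C`, together with the induced map on compacts. -/
structure SetRep {B : CAlg.{u}} (Y : Corr B) (E : Set Y.carrier) (D : Set B.carrier)
    (C : CAlg.{u}) where
  ψ : Y.carrier → C.carrier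
  π : B.carrier → C.carrier
  π_add : ∀ a b, a ∈ D → b ∈ D → π (a + b) = π a + π b
  π_csmul : ∀ (c : ℂ) a, a ∈ D → π (c • a) = c • π a
  π_mul : ∀ a b, a ∈ D → b ∈ D → π (a * b) = π a * π b
  π_star : ∀ a, a ∈ D → π (star a) = star (π a)
  ψ_add : ∀ x y, x ∈ E → y ∈ E → ψ (x + y) = ψ x + ψ y
  ψ_csmul : ∀ (c : ℂ) x, x ∈ E → ψ (c • x) = c • ψ x
  ψ_lact : ∀ a x, a ∈ D → x ∈ E → ψ (Y.lact a x) = π a * ψ x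
  ψ_inn : ∀ x y, x ∈ E → y ∈ E → π (Y.inn x y) = star (ψ x) * ψ y
  ψ1 : (Y.carrier →L[ℂ] Y.carrier) → C.carrier
  ψ1_θ : ∀ m n, m ∈ E → n ∈ E → ψ1 (Y.rankOne m n) = ψ m * star (ψ n)
  ψ1_add : ∀ T T', T ∈ Y.KSet E → T' ∈ Y.KSet E → ψ1 (T + T') = ψ1 T + ψ1 T'
  ψ1_csmul : ∀ (c : ℂ) T, T ∈ Y.KSet E → ψ1 (c • T) = c • ψ1 T
  ψ1_cont : ContinuousOn ψ1 (Y.KSet E)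

/-- Covariance of a set-level representation. -/
def SetRep.Covariant {B : CAlg.{u}} {Y : Corr B} {E : Set Y.carrier}
    {D : Set B.carrier} {C : CAlg.{u}} (r : SetRep Y E D C) : Prop :=
  ∀ a ∈ Y.subKatsura E D, ∀ T ∈ Y.KSet E,
    (∀ z ∈ E, Y.lact a z = T z) → r.ψ1 T = r.π a

/-- The Cuntz–Pimsner algebra of a set-level sub-correspondence `(E, D)`,
with its universal covariant representation. -/
structure SetCP {B : CAlg.{u}} (Y : Corr B) (E : Set Y.carrier) (D : Set B.carrier) where
  O : CAlg.{u}
  k : SetRep Y E D O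
  covariant : k.Covariant
  π_injective : ∀ a b, a ∈ D → b ∈ D → k.π a = k.π b → a = b
  generated : closure (↑(NonUnitalStarAlgebra.adjoin ℂ (k.ψ '' E ∪ k.π '' D)) :
      Set O.carrier) = Set.univ
  lift : ∀ {C : CAlg.{u}} (r : SetRep Y E D C), r.Covariant →
      (O.carrier →⋆ₙₐ[ℂ] C.carrier)
  lift_ψ : ∀ {C : CAlg.{u}} (r : SetRep Y E D C) (h : r.Covariant), ∀ x ∈ E,
      lift r h (k.ψ x) = r.ψ x
  lift_π : ∀ {C : CAlg.{u}} (r : SetRep Y E D C) (h : r.Covariant), ∀ a ∈ D,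
      lift r h (k.π a) = r.π a
  lift_unique : ∀ {C : CAlg.{u}} (r : SetRep Y E D C) (h : r.Covariant)
      (g : O.carrier →⋆ₙₐ[ℂ] C.carrier),
      (∀ x ∈ E, g (k.ψ x) = r.ψ x) → (∀ a ∈ D, g (k.π a) = r.π a) → g = lift r h



open MultiplierAlgebra in
/-- auxiliary algebra lemma -/
private theorem star_mul_mul_congr {M : Type*} [NonUnitalRing M] [StarRing M]
    (u u' w w' x y : M) (h : star u * u' = star w * w') :
    star (u * x) * (u' * y) = star (w * x) * (w' * y) := by
  rw [star_mul, star_mul, mul_assoc, mul_assoc, ← mul_assoc (star u), ← mul_assoc (star w), h]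

namespace MulAlg

variable {B : CAlg.{u}} (mB : MulAlg B)

/-- Left multiplication by a multiplier, as a continuous linear map on `B`. -/
noncomputable def mulL (m : mB.M.carrier) : B.carrier →L[ℂ] B.carrier :=
  LinearMap.mkContinuous
    { toFun := fun b => (mB.ideal_left m b).choose
      map_add' := fun b c => by
        apply mB.injective
        have hb := (mB.ideal_left m b).choose_spec
        have hc := (mB.ideal_left m c).choose_spec
        have hbc := (mB.ideal_left m (b + c)).choose_spec
        set x := (mB.ideal_left m b).choose
        set y := (mB.ideal_left m c).choose
        set z := (mB.ideal_left m (b + c)).choose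
        show mB.ι z = mB.ι (x + y)
        rw [← hbc, map_add mB.ι b c, mul_add, hb, hc]
        exact (map_add mB.ι x y).symm
      map_smul' := fun c b => by
        apply mB.injective
        have hb := (mB.ideal_left m b).choose_spec
        have hcb := (mB.ideal_left m (c • b)).choose_spec
        set x := (mB.ideal_left m b).choose
        set z := (mB.ideal_left m (c • b)).choose
        show mB.ι z = mB.ι (c • x)
        rw [← hcb, map_smul mB.ι c b, mul_smul_comm, hb]
        exact (map_smul mB.ι c x).symm }
    ‖m‖ (fun b => by
      have hb := (mB.ideal_left m b).choose_spec
      set x := (mB.ideal_left m b).choose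
      show ‖x‖ ≤ ‖m‖ * ‖b‖
      rw [← mB.isometry x, ← hb]
      calc ‖m * mB.ι b‖ ≤ ‖m‖ * ‖mB.ι b‖ := norm_mul_le _ _
        _ = ‖m‖ * ‖b‖ := by rw [mB.isometry])

theorem mulL_spec (m : mB.M.carrier) (b : B.carrier) :
    m * mB.ι b = mB.ι (mB.mulL m b) :=
  (mB.ideal_left m b).choose_spec

theorem eq_zero_of_dense {gen : Set B.carrier}
    (hd : closure (↑(Submodule.span ℂ gen) : Set B.carrier) = Set.univ)
    {m : mB.M.carrier} (h : ∀ b ∈ gen, m * mB.ι b = 0) : m = 0 := by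
  have hsub : (↑(Submodule.span ℂ gen) : Set B.carrier) ⊆ {b | mB.mulL m b = 0} := by
    intro b hb
    induction hb using Submodule.span_induction with
    | mem x hx =>
        show mB.mulL m x = 0
        apply mB.injective
        rw [map_zero, ← mulL_spec]
        exact h x hx
    | zero => show mB.mulL m 0 = 0; simp
    | add x y _ _ hx hy =>
        show mB.mulL m (x + y) = 0
        rw [map_add, Set.mem_setOf_eq.mp hx, Set.mem_setOf_eq.mp hy, add_zero]
    | smul c x _ hx =>
        show mB.mulL m (c • x) = 0
        rw [map_smul, Set.mem_setOf_eq.mp hx, smul_zero]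
  have hclosed : IsClosed {b : B.carrier | mB.mulL m b = 0} :=
    isClosed_eq (mB.mulL m).continuous continuous_const
  have huniv : (Set.univ : Set B.carrier) ⊆ {b : B.carrier | mB.mulL m b = 0} := by
    rw [← hd]; exact closure_minimal hsub hclosed
  refine mB.essential m fun b => ?_
  rw [mulL_spec, Set.mem_setOf_eq.mp (huniv (Set.mem_univ b)), map_zero]

theorem eq_of_dense {gen : Set B.carrier}
    (hd : closure (↑(Submodule.span ℂ gen) : Set B.carrier) = Set.univ)
    {m m' : mB.M.carrier} (h : ∀ b ∈ gen, m * mB.ι b = m' * mB.ι b) : m = m' := by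
  have := mB.eq_zero_of_dense hd (m := m - m') (fun b hb => by rw [sub_mul, h b hb, sub_self])
  exact sub_eq_zero.mp this

/-- The key graph construction: given maps `f g : α → M(B)` with
`⟨g(a), g(a')⟩ = ⟨f(a), f(a')⟩` and `f(α)·B` dense in `B`, there is a continuous linear
map `T : B → B` sending `f(a)b'` to `g(a)b'`. -/
theorem graph_clm {α : Type*} (f g : α → mB.M.carrier)
    (hfg : ∀ a a', star (g a) * g a' = star (f a) * f a')
    (hd : closure (↑(Submodule.span ℂ
        {b : B.carrier | ∃ a b', mB.ι b = f a * mB.ι b'}) : Set B.carrier) = Set.univ) :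
    ∃ T : B.carrier →L[ℂ] B.carrier, ∀ (a : α) (b' b c : B.carrier),
      mB.ι b = f a * mB.ι b' → mB.ι c = g a * mB.ι b' → T b = c := by
  classical
  set gen : Set (B.carrier × B.carrier) :=
    {p | ∃ a b', mB.ι p.1 = f a * mB.ι b' ∧ mB.ι p.2 = g a * mB.ι b'} with hgen
  set G : Submodule ℂ (B.carrier × B.carrier) := Submodule.span ℂ gen with hG
  have hip : ∀ p ∈ G, ∀ q ∈ G,
      star (mB.ι p.2) * mB.ι q.2 = star (mB.ι p.1) * mB.ι q.1 := by
    intro p hp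
    induction hp using Submodule.span_induction with
    | mem x hx =>
        intro q hq
        induction hq using Submodule.span_induction with
        | mem y hy =>
            obtain ⟨a, b', h1, h2⟩ := hx
            obtain ⟨a₂, b₂, h3, h4⟩ := hy
            rw [h1, h2, h3, h4]
            exact star_mul_mul_congr _ _ _ _ _ _ (hfg a a₂)
        | zero => simp
        | add y z _ _ ihy ihz =>
            simp only [Prod.fst_add, Prod.snd_add, map_add, mul_add, ihy, ihz]
        | smul c y _ ihy =>
            simp only [Prod.smul_fst, Prod.smul_snd, map_smul, mul_smul_comm, ihy]
    | zero => intro q hq; simp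
    | add p₁ p₂ _ _ ih1 ih2 =>
        intro q hq
        simp only [Prod.fst_add, Prod.snd_add, map_add, star_add, add_mul,
          ih1 q hq, ih2 q hq]
    | smul c p _ ih =>
        intro q hq
        simp only [Prod.smul_fst, Prod.smul_snd, map_smul, star_smul, smul_mul_assoc,
          ih q hq]
  have hnorm : ∀ p ∈ G, ‖p.2‖ = ‖p.1‖ := by
    intro p hp
    have h := hip p hp p hp
    have h2 : ‖mB.ι p.2‖ * ‖mB.ι p.2‖ = ‖mB.ι p.1‖ * ‖mB.ι p.1‖ := by
      rw [← CStarRing.norm_star_mul_self, ← CStarRing.norm_star_mul_self, h]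
    rw [mB.isometry, mB.isometry] at h2
    have n1 := norm_nonneg p.1
    have n2 := norm_nonneg p.2
    refine le_antisymm ?_ ?_ <;> nlinarith
  have huniq : ∀ b c c' : B.carrier, (b, c) ∈ G → (b, c') ∈ G → c = c' := by
    intro b c c' h1 h2
    have h3 := G.sub_mem h1 h2
    have h4 : ((b, c) - (b, c') : B.carrier × B.carrier) = (0, c - c') := by
      simp [Prod.ext_iff]
    rw [h4] at h3
    have h5 := hnorm _ h3
    simp only [norm_zero] at h5
    have h6 : ‖c - c'‖ = 0 := h5
    rw [norm_eq_zero, sub_eq_zero] at h6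
    exact h6
  set P : Submodule ℂ B.carrier := G.map (LinearMap.fst ℂ B.carrier B.carrier) with hP
  have hPeq : P = Submodule.span ℂ {b : B.carrier | ∃ a b', mB.ι b = f a * mB.ι b'} := by
    rw [hP, hG, Submodule.map_span]
    congr 1
    ext b
    constructor
    · rintro ⟨p, ⟨a, b', h1, h2⟩, rfl⟩
      exact ⟨a, b', h1⟩
    · rintro ⟨a, b', h1⟩
      obtain ⟨c, hc⟩ := mB.ideal_left (g a) b'
      exact ⟨(b, c), ⟨a, b', h1, hc.symm⟩, rfl⟩
  have hPd : Dense (P : Set B.carrier) := by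
    rw [dense_iff_closure_eq, hPeq, hd]
  have hex : ∀ p : P, ∃ c : B.carrier, ((p : B.carrier), c) ∈ G := by
    rintro ⟨b, hb⟩
    obtain ⟨q, hq, hq2⟩ := Submodule.mem_map.mp hb
    refine ⟨q.2, ?_⟩
    have : ((b, q.2) : B.carrier × B.carrier) = q := by
      have : q.1 = b := hq2
      simp [← this]
    rw [this]
    exact hq
  choose Tp hTp using hex
  have hTadd : ∀ p q : P, Tp (p + q) = Tp p + Tp q := by
    intro p q
    refine huniq _ _ _ (hTp (p + q)) ?_
    have := G.add_mem (hTp p) (hTp q)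
    simpa [Prod.mk_add_mk] using this
  have hTsmul : ∀ (c : ℂ) (p : P), Tp (c • p) = c • Tp p := by
    intro c p
    refine huniq _ _ _ (hTp (c • p)) ?_
    have := G.smul_mem c (hTp p)
    simpa [Prod.smul_mk] using this
  let T0 : ↥P →ₗ[ℂ] B.carrier :=
    { toFun := Tp
      map_add' := hTadd
      map_smul' := hTsmul }
  have hT0norm : ∀ p : P, ‖T0 p‖ ≤ 1 * ‖p‖ := by
    intro p
    rw [_root_.one_mul]
    show ‖Tp p‖ ≤ ‖(p : B.carrier)‖
    exact le_of_eq (hnorm _ (hTp p))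
  let T0c : ↥P →L[ℂ] B.carrier := T0.mkContinuous 1 hT0norm
  have hdr : DenseRange (P.subtypeL : ↥P →L[ℂ] B.carrier) := hPd.denseRange_val
  have hui : IsUniformInducing (P.subtypeL : ↥P →L[ℂ] B.carrier) :=
    isUniformEmbedding_subtype_val.isUniformInducing
  refine ⟨T0c.extend P.subtypeL, ?_⟩
  intro a b' b c h1 h2
  have hbc : ((b, c) : B.carrier × B.carrier) ∈ G :=
    Submodule.subset_span ⟨a, b', h1, h2⟩
  have hbP : b ∈ P := Submodule.mem_map.mpr ⟨(b, c), hbc, rfl⟩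
  have he : T0c.extend P.subtypeL b = T0c ⟨b, hbP⟩ := by
    have h3 := ContinuousLinearMap.extend_eq (f := T0c) (e := P.subtypeL) hdr hui ⟨b, hbP⟩
    simpa using h3
  rw [he]
  exact huniq b _ c (hTp ⟨b, hbP⟩) hbc

end MulAlg

/-- Let `φ` and `φ'` be automorphisms of C*-algebras `A` and `B`,
`π : A → M(B)` a nondegenerate homomorphism, and `v ∈ M(B)` a unitary with
`vπ(φ(a)) = φ̄'(π(a))v` for all `a`.  Then `ψ(a) := vπ(a)` defines a nondegenerate
correspondence homomorphism `(ψ, π) : (A(φ), A) → (M(B(φ')), M(B))`, where the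
`φ`-correspondence `A(φ)` is the Hilbert module `A` (`⟨a,b⟩ = a*b`) with left
action `a·b := φ(a)b`, and `M(B(φ'))` is the `φ̄'`-correspondence `M(B)(φ̄')`.
Conversely, every nondegenerate correspondence homomorphism
`(ψ, π) : (A(φ), A) → (M(B(φ')), M(B))` is of this form for a unique such
unitary `v`. -/
theorem phi_correspondence_homomorphisms
    (A B : CAlg.{u})
    (φ : A.carrier →⋆ₙₐ[ℂ] A.carrier) (hφ : Function.Bijective φ)
    (φ' : B.carrier →⋆ₙₐ[ℂ] B.carrier) (hφ' : Function.Bijective φ')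
    (mB : MulAlg B)
    -- the strict extension `φ̄'` of `φ'` to `M(B)`
    (φbar : mB.M.carrier →⋆ₙₐ[ℂ] mB.M.carrier)
    (φbar_ι : ∀ b, φbar (mB.ι b) = mB.ι (φ' b))
    (φbar_one : φbar mB.one = mB.one)
    -- a nondegenerate homomorphism `π : A → M(B)`
    (π : A.carrier →⋆ₙₐ[ℂ] mB.M.carrier)
    (π_nondeg : closure (↑(Submodule.span ℂ
        {b : B.carrier | ∃ a b', mB.ι b = π a * mB.ι b'}) : Set B.carrier) = Set.univ) :
    -- (1) if `v ∈ M(B)` is a unitary intertwining `π∘φ` and `φ̄'∘π`, then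
    -- `ψ := v π(·)` is a nondegenerate correspondence homomorphism
    -- `(ψ, π) : (A(φ), A) → (M(B(φ')), M(B))`
    (∀ v : mB.M.carrier,
      star v * v = mB.one → v * star v = mB.one →
      (∀ a, v * π (φ a) = φbar (π a) * v) →
      -- `ψ` intertwines the left actions: `ψ(φ(a)a') = φ̄'(π(a)) ψ(a')`
      (∀ a a', v * π (φ a * a') = φbar (π a) * (v * π a')) ∧
      -- `ψ` preserves the inner products: `⟨ψ(a), ψ(a')⟩ = π(a* a')`
      (∀ a a', star (v * π a) * (v * π a') = π (star a * a')) ∧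
      -- `(ψ, π)` is nondegenerate: `ψ(A)·B` is dense in `B`
      closure (↑(Submodule.span ℂ
        {b : B.carrier | ∃ a b', mB.ι b = v * π a * mB.ι b'}) : Set B.carrier)
        = Set.univ) ∧
    -- (2) conversely, every nondegenerate correspondence homomorphism
    -- `(ψ, π) : (A(φ), A) → (M(B(φ')), M(B))` is of this form, for a unique
    -- such unitary `v`
    (∀ ψ : A.carrier → mB.M.carrier,
      (∀ a a', ψ (a + a') = ψ a + ψ a') →
      (∀ (c : ℂ) a, ψ (c • a) = c • ψ a) →
      (∀ a a', ψ (φ a * a') = φbar (π a) * ψ a') →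
      (∀ a a', star (ψ a) * ψ a' = π (star a * a')) →
      closure (↑(Submodule.span ℂ
        {b : B.carrier | ∃ a b', mB.ι b = ψ a * mB.ι b'}) : Set B.carrier)
        = Set.univ →
      ∃! v : mB.M.carrier,
        (star v * v = mB.one ∧ v * star v = mB.one) ∧
        (∀ a, v * π (φ a) = φbar (π a) * v) ∧
        (∀ a, ψ a = v * π a)) := by
  constructor
  · -- Part (1)
    intro v hv1 hv2 hv3
    refine ⟨?_, ?_, ?_⟩
    · intro a a'
      rw [map_mul, ← mul_assoc, hv3 a, mul_assoc]
    · intro a a'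
      rw [map_mul, map_star, star_mul, mul_assoc, ← mul_assoc (star v), hv1, mB.one_mul]
    · refine Set.eq_univ_iff_forall.mpr fun b => ?_
      have hb1 : mB.ι (mB.mulL v (mB.mulL (star v) b)) = mB.ι b := by
        rw [← MulAlg.mulL_spec, ← MulAlg.mulL_spec, ← mul_assoc, hv2, mB.one_mul]
      have hbeq : mB.mulL v (mB.mulL (star v) b) = b := mB.injective hb1
      have hmem : mB.mulL (star v) b ∈ closure (↑(Submodule.span ℂ
          {b : B.carrier | ∃ a b', mB.ι b = π a * mB.ι b'}) : Set B.carrier) := by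
        rw [π_nondeg]; trivial
      have hmap : ∀ y ∈ Submodule.span ℂ {b : B.carrier | ∃ a b', mB.ι b = π a * mB.ι b'},
          mB.mulL v y ∈ Submodule.span ℂ
            {b : B.carrier | ∃ a b', mB.ι b = v * π a * mB.ι b'} := by
        intro y hy
        induction hy using Submodule.span_induction with
        | mem x hx =>
            obtain ⟨a, b', hx⟩ := hx
            refine Submodule.subset_span ⟨a, b', ?_⟩
            rw [← MulAlg.mulL_spec, hx, mul_assoc]
        | zero => rw [map_zero]; exact Submodule.zero_mem _
        | add x y _ _ hx hy => rw [map_add]; exact Submodule.add_mem _ hx hy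
        | smul c x _ hx => rw [map_smul]; exact Submodule.smul_mem _ _ hx
      have h2 : mB.mulL v '' closure (↑(Submodule.span ℂ
            {b : B.carrier | ∃ a b', mB.ι b = π a * mB.ι b'}) : Set B.carrier)
          ⊆ closure (mB.mulL v '' (↑(Submodule.span ℂ
            {b : B.carrier | ∃ a b', mB.ι b = π a * mB.ι b'}) : Set B.carrier)) :=
        image_closure_subset_closure_image (mB.mulL v).continuous
      have h3 : closure (mB.mulL v '' (↑(Submodule.span ℂ
            {b : B.carrier | ∃ a b', mB.ι b = π a * mB.ι b'}) : Set B.carrier))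
          ⊆ closure (↑(Submodule.span ℂ
            {b : B.carrier | ∃ a b', mB.ι b = v * π a * mB.ι b'}) : Set B.carrier) := by
        refine closure_mono ?_
        rintro _ ⟨y, hy, rfl⟩
        exact hmap y hy
      have h4 := h3 (h2 ⟨_, hmem, rfl⟩)
      rwa [hbeq] at h4
  · -- Part (2)
    intro ψ hadd hsmul hlact hinn hnd
    have hfg1 : ∀ a a', star (ψ a) * ψ a' = star (π a) * π a' := by
      intro a a'
      rw [hinn, map_mul, map_star]
    obtain ⟨T, hT⟩ := mB.graph_clm π ψ hfg1 π_nondeg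
    obtain ⟨S, hS⟩ := mB.graph_clm ψ π (fun a a' => (hfg1 a a').symm) hnd
    -- the key identity relating T and S
    have keyGen : ∀ (a₂ : A.carrier) (b₂ u : B.carrier), mB.ι u = ψ a₂ * mB.ι b₂ →
        ∀ y, star (T y) * u = star y * S u := by
      intro a₂ b₂ u hu
      have hSu : S u = mB.mulL (π a₂) b₂ :=
        hS a₂ b₂ u _ hu (MulAlg.mulL_spec mB _ b₂).symm
      intro y
      have hclosed : IsClosed {y : B.carrier | star (T y) * u = star y * S u} :=
        isClosed_eq ((continuous_star.comp T.continuous).mul continuous_const)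
          (continuous_star.mul continuous_const)
      have hsub : (↑(Submodule.span ℂ
          {b : B.carrier | ∃ a b', mB.ι b = π a * mB.ι b'}) : Set B.carrier)
          ⊆ {y : B.carrier | star (T y) * u = star y * S u} := by
        intro y hy
        induction hy using Submodule.span_induction with
        | mem x hx =>
            obtain ⟨a, b', hx⟩ := hx
            have hTx : T x = mB.mulL (ψ a) b' :=
              hT a b' x _ hx (MulAlg.mulL_spec mB _ b').symm
            show star (T x) * u = star x * S u
            apply mB.injective
            rw [map_mul, map_mul, map_star, map_star, hTx, hSu,
              ← MulAlg.mulL_spec, ← MulAlg.mulL_spec, hx, hu]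
            exact star_mul_mul_congr _ _ _ _ _ _ (hfg1 a a₂)
        | zero => show star (T 0) * u = star 0 * S u; simp
        | add x y _ _ hx hy =>
            have hx' : star (T x) * u = star x * S u := hx
            have hy' : star (T y) * u = star y * S u := hy
            show star (T (x + y)) * u = star (x + y) * S u
            rw [map_add, star_add, star_add, add_mul, add_mul, hx', hy']
        | smul c x _ hx =>
            have hx' : star (T x) * u = star x * S u := hx
            show star (T (c • x)) * u = star (c • x) * S u
            rw [map_smul, star_smul, star_smul, smul_mul_assoc, smul_mul_assoc, hx']
      have h5 := closure_minimal hsub hclosed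
      rw [π_nondeg] at h5
      exact h5 trivial
    have key : ∀ y u : B.carrier, star (T y) * u = star y * S u := by
      intro y u
      have hclosed : IsClosed {u : B.carrier | star (T y) * u = star y * S u} :=
        isClosed_eq (continuous_const.mul continuous_id)
          (continuous_const.mul S.continuous)
      have hsub : (↑(Submodule.span ℂ
          {b : B.carrier | ∃ a b', mB.ι b = ψ a * mB.ι b'}) : Set B.carrier)
          ⊆ {u : B.carrier | star (T y) * u = star y * S u} := by
        intro u hu
        induction hu using Submodule.span_induction with
        | mem x hx =>
            obtain ⟨a₂, b₂, hx⟩ := hx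
            exact keyGen a₂ b₂ x hx y
        | zero => show star (T y) * 0 = star y * S 0; simp
        | add x z _ _ hx hz =>
            have hx' : star (T y) * x = star y * S x := hx
            have hz' : star (T y) * z = star y * S z := hz
            show star (T y) * (x + z) = star y * S (x + z)
            rw [map_add, mul_add, mul_add, hx', hz']
        | smul c x _ hx =>
            have hx' : star (T y) * x = star y * S x := hx
            show star (T y) * (c • x) = star y * S (c • x)
            rw [map_smul, mul_smul_comm, mul_smul_comm, hx']
      have h5 := closure_minimal hsub hclosed
      rw [hnd] at h5
      exact h5 trivial
    -- the right centralizer map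
    let Rm : B.carrier →L[ℂ] B.carrier := LinearMap.mkContinuous
      { toFun := fun x => star (S (star x))
        map_add' := fun x y => by simp [star_add, map_add]
        map_smul' := fun c x => by simp [star_smul, map_smul] }
      ‖S‖ (fun x => by
        show ‖star (S (star x))‖ ≤ ‖S‖ * ‖x‖
        rw [norm_star]
        calc ‖S (star x)‖ ≤ ‖S‖ * ‖star x‖ := S.le_opNorm _
          _ = ‖S‖ * ‖x‖ := by rw [norm_star])
    have hcentral : ∀ x y : B.carrier, Rm x * y = x * T y := by
      intro x y
      have h := congrArg star (key y (star x))
      rw [star_mul, star_mul, star_star, star_star] at h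
      exact (by simpa using h.symm : star (S (star x)) * y = x * T y)
    let vhat : DoubleCentralizer ℂ B.carrier := ⟨⟨T, Rm⟩, hcentral⟩
    -- cancellation lemmas in B
    have cancel_left : ∀ w w' : B.carrier, (∀ z, z * w = z * w') → w = w' := by
      intro w w' h
      have h2 : star (w - w') * (w - w') = 0 := by
        rw [mul_sub, h (star (w - w')), sub_self]
      rw [CStarRing.star_mul_self_eq_zero_iff] at h2
      exact sub_eq_zero.mp h2
    have cancel_right : ∀ w w' : B.carrier, (∀ z, w * z = w' * z) → w = w' := by
      intro w w' h
      have h2 : (w - w') * star (w - w') = 0 := by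
        rw [sub_mul, h (star (w - w')), sub_self]
      rw [CStarRing.mul_star_self_eq_zero_iff] at h2
      exact sub_eq_zero.mp h2
    have fst_mul : ∀ (d : DoubleCentralizer ℂ B.carrier) (a x : B.carrier),
        d.fst (a * x) = d.fst a * x := by
      intro d a x
      apply cancel_left
      intro z
      calc z * d.fst (a * x) = d.snd z * (a * x) := (d.central z (a * x)).symm
        _ = d.snd z * a * x := (mul_assoc _ _ _).symm
        _ = z * d.fst a * x := by rw [d.central]
        _ = z * (d.fst a * x) := mul_assoc _ _ _
    have snd_mul : ∀ (d : DoubleCentralizer ℂ B.carrier) (a x : B.carrier),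
        d.snd (x * a) = x * d.snd a := by
      intro d a x
      apply cancel_right
      intro z
      calc d.snd (x * a) * z = x * a * d.fst z := d.central _ _
        _ = x * (a * d.fst z) := mul_assoc _ _ _
        _ = x * (d.snd a * z) := by rw [d.central]
        _ = x * d.snd a * z := (mul_assoc _ _ _).symm
    let j : B.carrier →⋆ₙₐ[ℂ] DoubleCentralizer ℂ B.carrier := DoubleCentralizer.coeHom
    have hjfst : ∀ (b x : B.carrier), (j b).fst x = b * x := fun b x => rfl
    have hjsnd : ∀ (b x : B.carrier), (j b).snd x = x * b := fun b x => rfl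
    have jinj : Function.Injective j := by
      intro x y h
      apply cancel_right
      intro z
      have h2 := congrArg (fun d : DoubleCentralizer ℂ B.carrier => d.fst z) h
      simpa [hjfst] using h2
    have hmul_coe : ∀ (d : DoubleCentralizer ℂ B.carrier) (a : B.carrier),
        d * j a = j (d.fst a) := by
      intro d a
      refine DoubleCentralizer.ext _ _ _ _ (Prod.ext ?_ ?_)
      · ext x
        have h1 : (d * j a).fst x = d.fst (a * x) := by
          rw [DoubleCentralizer.mul_fst]; rfl
        have h2 : (j (d.fst a)).fst x = d.fst a * x := rfl
        show (d * j a).fst x = (j (d.fst a)).fst x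
        rw [h1, h2, fst_mul]
      · ext x
        have h1 : (d * j a).snd x = d.snd x * a := by
          rw [DoubleCentralizer.mul_snd]; rfl
        have h2 : (j (d.fst a)).snd x = x * d.fst a := rfl
        show (d * j a).snd x = (j (d.fst a)).snd x
        rw [h1, h2, d.central]
    have hcoe_mul : ∀ (d : DoubleCentralizer ℂ B.carrier) (a : B.carrier),
        j a * d = j (d.snd a) := by
      intro d a
      refine DoubleCentralizer.ext _ _ _ _ (Prod.ext ?_ ?_)
      · ext x
        have h1 : (j a * d).fst x = a * d.fst x := by
          rw [DoubleCentralizer.mul_fst]; rfl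
        have h2 : (j (d.snd a)).fst x = d.snd a * x := rfl
        show (j a * d).fst x = (j (d.snd a)).fst x
        rw [h1, h2, d.central]
      · ext x
        have h1 : (j a * d).snd x = d.snd (x * a) := by
          rw [DoubleCentralizer.mul_snd]; rfl
        have h2 : (j (d.snd a)).snd x = x * d.snd a := rfl
        show (j a * d).snd x = (j (d.snd a)).snd x
        rw [h1, h2, snd_mul]
    have hess : ∀ d : DoubleCentralizer ℂ B.carrier, (∀ a, d * j a = 0) → d = 0 := by
      intro d h
      have hfst : ∀ a, d.fst a = 0 := by
        intro a
        have h2 := h a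
        rw [hmul_coe] at h2
        have h3 : j (d.fst a) = j 0 := by rw [h2, map_zero]
        exact jinj h3
      have hsnd : ∀ a, d.snd a = 0 := by
        intro a
        apply cancel_right
        intro z
        rw [d.central, hfst, mul_zero, zero_mul]
      refine DoubleCentralizer.ext _ _ _ _ (Prod.ext ?_ ?_)
      · ext x
        show d.fst x = (0 : DoubleCentralizer ℂ B.carrier).fst x
        rw [hfst, DoubleCentralizer.zero_fst]
        rfl
      · ext x
        show d.snd x = (0 : DoubleCentralizer ℂ B.carrier).snd x
        rw [hsnd, DoubleCentralizer.zero_snd]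
        rfl
    obtain ⟨h, hh⟩ := mB.largest (D := ⟨DoubleCentralizer ℂ B.carrier⟩) j jinj
      (fun d a => ⟨d.fst a, hmul_coe d a⟩) (fun d a => ⟨d.snd a, hcoe_mul d a⟩) hess
    set v := h vhat with hvdef
    have hvι : ∀ b : B.carrier, v * mB.ι b = mB.ι (T b) := by
      intro b
      rw [hvdef, ← hh b, ← map_mul, hmul_coe, hh]
    have hψv : ∀ a, ψ a = v * π a := by
      intro a
      have hzero : ∀ b : B.carrier, (ψ a - v * π a) * mB.ι b = 0 := by
        intro b
        have h1 : mB.ι (mB.mulL (π a) b) = π a * mB.ι b := (MulAlg.mulL_spec mB _ b).symm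
        have h2 : mB.ι (mB.mulL (ψ a) b) = ψ a * mB.ι b := (MulAlg.mulL_spec mB _ b).symm
        have h3 : T (mB.mulL (π a) b) = mB.mulL (ψ a) b := hT a b _ _ h1 h2
        calc (ψ a - v * π a) * mB.ι b
            = ψ a * mB.ι b - v * (π a * mB.ι b) := by rw [sub_mul, mul_assoc]
          _ = 0 := by rw [← h1, hvι, h3, h2, sub_self]
      have h4 := mB.essential _ hzero
      exact sub_eq_zero.mp h4
    have hstar : ∀ a, star v * ψ a = π a := by
      intro a
      have h1 : ∀ a', star (π a') * (star v * ψ a - π a) = 0 := by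
        intro a'
        rw [mul_sub]
        have h2 : star (π a') * (star v * ψ a) = star (π a') * π a := by
          calc star (π a') * (star v * ψ a) = star (v * π a') * ψ a := by
                rw [star_mul, mul_assoc]
            _ = star (ψ a') * ψ a := by rw [← hψv]
            _ = star (π a') * π a := hfg1 a' a
        rw [h2, sub_self]
      have h2 : ∀ b ∈ {b : B.carrier | ∃ a' b', mB.ι b = π a' * mB.ι b'},
          star (star v * ψ a - π a) * mB.ι b = 0 := by
        rintro b ⟨a', b', hb⟩
        have h3 : star (star v * ψ a - π a) * π a' = 0 := by
          have h4 := congrArg star (h1 a')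
          rwa [star_mul, star_star, star_zero] at h4
        rw [hb, ← mul_assoc, h3, zero_mul]
      have h5 : star (star v * ψ a - π a) = 0 := mB.eq_zero_of_dense π_nondeg h2
      have h6 : star v * ψ a - π a = 0 := by
        rw [← star_star (star v * ψ a - π a), h5, star_zero]
      exact sub_eq_zero.mp h6
    have hu1 : star v * v = mB.one := by
      apply mB.eq_of_dense π_nondeg
      rintro b ⟨a, b', hb⟩
      rw [mB.one_mul, hb, mul_assoc, ← mul_assoc v, ← hψv a, ← mul_assoc, hstar]
    have hu2 : v * star v = mB.one := by
      apply mB.eq_of_dense hnd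
      rintro b ⟨a, b', hb⟩
      rw [mB.one_mul, hb, mul_assoc, ← mul_assoc (star v), hstar, ← mul_assoc, ← hψv]
    have hint : ∀ a, v * π (φ a) = φbar (π a) * v := by
      intro a
      apply mB.eq_of_dense π_nondeg
      rintro b ⟨a', b', hb⟩
      have e1 : v * π (φ a) * (π a' * mB.ι b') = ψ (φ a * a') * mB.ι b' := by
        rw [hψv (φ a * a'), map_mul]
        simp only [mul_assoc]
      have e2 : φbar (π a) * v * (π a' * mB.ι b') = ψ (φ a * a') * mB.ι b' := by
        rw [hlact a a', hψv a']
        simp only [mul_assoc]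
      rw [hb, e1, e2]
    refine ⟨v, ⟨⟨hu1, hu2⟩, hint, fun a => hψv a⟩, ?_⟩
    rintro v' ⟨⟨hu1', hu2'⟩, hint', hψv'⟩
    apply mB.eq_of_dense π_nondeg
    rintro b ⟨a, b', hb⟩
    rw [hb, ← mul_assoc, ← mul_assoc, ← hψv' a, ← hψv a]

end Paper
end
end

section
/- Let (X,A) be a nondegenerate C*-correspondence. Then the Katsura ideal of the A-multiplier correspondence satisfies J_{M_A(X)} ⊆ M(A; J_X), the strict closure of J_X in M(A). -/
noncomputable section
namespace Paper

universe u

/-! ### Auxiliary material for Statement 13 -/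

section Statement13Aux

variable {A : CAlg.{u}}

private lemma eq_zero_of_self_eq_add {G : Type*} [AddCommGroup G] {s : G} (h : s = s + s) :
    s = 0 :=
  add_left_cancel (a := s) (h.symm.trans (add_zero s).symm)

namespace Corr

variable (X : Corr A)

lemma smulR_zero (x : X.carrier) : X.smulR x 0 = 0 :=
  eq_zero_of_self_eq_add <| by
    conv_lhs => rw [show (0 : A.carrier) = 0 + 0 by simp, X.smulR_add]

lemma zero_smulR (g : A.carrier) : X.smulR 0 g = 0 :=
  eq_zero_of_self_eq_add <| by
    conv_lhs => rw [show (0 : X.carrier) = 0 + 0 by simp, X.add_smulR]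

lemma smulR_neg (x : X.carrier) (g : A.carrier) : X.smulR x (-g) = -(X.smulR x g) := by
  have h : X.smulR x g + X.smulR x (-g) = 0 := by
    rw [← X.smulR_add]; simp [X.smulR_zero]
  linear_combination (norm := abel) h

lemma neg_smulR (x : X.carrier) (g : A.carrier) : X.smulR (-x) g = -(X.smulR x g) := by
  have h : X.smulR x g + X.smulR (-x) g = 0 := by
    rw [← X.add_smulR]; simp [X.zero_smulR]
  linear_combination (norm := abel) h

lemma smulR_sub (x : X.carrier) (g h : A.carrier) :
    X.smulR x (g - h) = X.smulR x g - X.smulR x h := by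
  rw [sub_eq_add_neg, X.smulR_add, X.smulR_neg, sub_eq_add_neg]

lemma sub_smulR (x y : X.carrier) (g : A.carrier) :
    X.smulR (x - y) g = X.smulR x g - X.smulR y g := by
  rw [sub_eq_add_neg, X.add_smulR, X.neg_smulR, sub_eq_add_neg]

lemma inn_zero_right (x : X.carrier) : X.inn x 0 = 0 :=
  eq_zero_of_self_eq_add <| by
    conv_lhs => rw [show (0 : X.carrier) = 0 + 0 by simp, X.inn_add_right]

lemma inn_zero_left (x : X.carrier) : X.inn 0 x = 0 := by
  rw [← X.inn_star, X.inn_zero_right, star_zero]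

lemma inn_neg_right (x y : X.carrier) : X.inn x (-y) = -(X.inn x y) := by
  have h : X.inn x y + X.inn x (-y) = 0 := by
    rw [← X.inn_add_right]; simp [X.inn_zero_right]
  linear_combination (norm := abel) h

lemma inn_sub_right (x y z : X.carrier) : X.inn x (y - z) = X.inn x y - X.inn x z := by
  rw [sub_eq_add_neg, X.inn_add_right, X.inn_neg_right, sub_eq_add_neg]

lemma inn_add_left (x y z : X.carrier) : X.inn (x + y) z = X.inn x z + X.inn y z := by
  rw [← X.inn_star, X.inn_add_right, star_add, X.inn_star, X.inn_star]

lemma inn_sub_left (x y z : X.carrier) : X.inn (x - y) z = X.inn x z - X.inn y z := by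
  rw [← X.inn_star, X.inn_sub_right, star_sub, X.inn_star, X.inn_star]

lemma lact_zero (g : A.carrier) : X.lact g 0 = 0 :=
  eq_zero_of_self_eq_add <| by
    conv_lhs => rw [show (0 : X.carrier) = 0 + 0 by simp, X.lact_add]

lemma zero_lact (x : X.carrier) : X.lact 0 x = 0 :=
  eq_zero_of_self_eq_add <| by
    conv_lhs => rw [show (0 : A.carrier) = 0 + 0 by simp, X.add_lact]

lemma lact_neg (g : A.carrier) (x : X.carrier) : X.lact g (-x) = -(X.lact g x) := by
  have h : X.lact g x + X.lact g (-x) = 0 := by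
    rw [← X.lact_add]; simp [X.lact_zero]
  linear_combination (norm := abel) h

lemma lact_sub (g : A.carrier) (x y : X.carrier) :
    X.lact g (x - y) = X.lact g x - X.lact g y := by
  rw [sub_eq_add_neg, X.lact_add, X.lact_neg, sub_eq_add_neg]

lemma norm_mul_self_eq_inn (x : X.carrier) : ‖x‖ * ‖x‖ = ‖X.inn x x‖ := by
  rw [X.norm_eq x]; exact Real.mul_self_sqrt (norm_nonneg _)

lemma eq_zero_of_inn_self (x : X.carrier) (h : X.inn x x = 0) : x = 0 := by
  have : ‖x‖ = 0 := by rw [X.norm_eq x, h, norm_zero, Real.sqrt_zero]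
  exact norm_eq_zero.mp this

lemma eq_zero_of_forall_inn (y : X.carrier) (h : ∀ w, X.inn w y = 0) : y = 0 :=
  X.eq_zero_of_inn_self y <| by
    have := h y
    rwa [show X.inn y y = star (X.inn y y) from (X.inn_star y y).symm ▸ rfl] at this ⊢

lemma rankOne_apply (m n z : X.carrier) :
    X.rankOne m n z = X.smulR m (X.inn n z) := rfl

end Corr

section Adjointable

variable (X : Corr A)

/-- `S` is an adjoint of `T` with respect to the `A`-valued inner product. -/
def AdjPair (T S : X.carrier →L[ℂ] X.carrier) : Prop :=
  ∀ x y, X.inn (T x) y = X.inn x (S y)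

variable {X}

namespace AdjPair

lemma symm {T S} (h : AdjPair X T S) : AdjPair X S T := fun x y => by
  calc X.inn (S x) y = star (X.inn y (S x)) := (X.inn_star y (S x)).symm
    _ = star (X.inn (T y) x) := by rw [h y x]
    _ = X.inn x (T y) := X.inn_star (T y) x

lemma unique {T S S'} (h : AdjPair X T S) (h' : AdjPair X T S') : S = S' := by
  ext y
  have hz : ∀ w, X.inn w (S y - S' y) = 0 := fun w => by
    rw [X.inn_sub_right, ← h w y, ← h' w y, sub_self]
  have h0 : S y - S' y = 0 := by
    refine X.eq_zero_of_inn_self _ ?_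
    have := hz (S y - S' y); exact this
  exact sub_eq_zero.mp h0

lemma norm_le {T S} (h : AdjPair X T S) : ‖S‖ ≤ ‖T‖ := by
  refine ContinuousLinearMap.opNorm_le_bound S (norm_nonneg T) fun y => ?_
  rcases eq_or_ne (S y) 0 with h0 | h0
  · rw [h0, norm_zero]; positivity
  · have hpos : 0 < ‖S y‖ := norm_pos_iff.mpr h0
    have h1 : ‖S y‖ * ‖S y‖ = ‖X.inn (S y) (S y)‖ := X.norm_mul_self_eq_inn _
    have h2 : X.inn (S y) (S y) = X.inn y (T (S y)) := h.symm y (S y)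
    have h3 : ‖X.inn y (T (S y))‖ ≤ ‖y‖ * (‖T‖ * ‖S y‖) := by
      refine (X.norm_inn_le y (T (S y))).trans ?_
      exact mul_le_mul_of_nonneg_left (T.le_opNorm (S y)) (norm_nonneg y)
    have h4 : ‖S y‖ * ‖S y‖ ≤ ‖y‖ * (‖T‖ * ‖S y‖) := by rw [h1, h2]; exact h3
    nlinarith [norm_nonneg y, norm_nonneg T]

lemma zero : AdjPair X 0 0 := fun x y => by
  simp [X.inn_zero_left, X.inn_zero_right]

lemma add {T S T' S'} (h : AdjPair X T S) (h' : AdjPair X T' S') :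
    AdjPair X (T + T') (S + S') := fun x y => by
  simp only [ContinuousLinearMap.add_apply, X.inn_add_left, X.inn_add_right, h x y, h' x y]

lemma sub {T S T' S'} (h : AdjPair X T S) (h' : AdjPair X T' S') :
    AdjPair X (T - T') (S - S') := fun x y => by
  simp only [ContinuousLinearMap.sub_apply, X.inn_sub_left, X.inn_sub_right, h x y, h' x y]

lemma mul {T S T' S'} (h : AdjPair X T S) (h' : AdjPair X T' S') :
    AdjPair X (T * T') (S' * S) := fun x y => by
  simp only [ContinuousLinearMap.mul_apply]
  rw [h (T' x) y, h' x (S y)]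

lemma smul {T S} (h : AdjPair X T S) (c : ℂ) :
    AdjPair X (c • T) (star c • S) := fun x y => by
  have hL : X.inn ((c • T) x) y = star c • X.inn (T x) y := by
    rw [ContinuousLinearMap.smul_apply, ← X.inn_star y (c • T x), X.inn_csmul_right,
      star_smul, X.inn_star]
  rw [hL, ContinuousLinearMap.smul_apply, X.inn_csmul_right, h x y]

end AdjPair

variable (X)

/-- The adjointable operators on `X`, as a non-unital subalgebra of `X →L[ℂ] X`. -/
def adjAlg : NonUnitalSubalgebra ℂ (X.carrier →L[ℂ] X.carrier) where
  carrier := {T | ∃ S, AdjPair X T S}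
  zero_mem' := ⟨0, AdjPair.zero⟩
  add_mem' := fun ⟨S, h⟩ ⟨S', h'⟩ => ⟨S + S', h.add h'⟩
  mul_mem' := fun ⟨S, h⟩ ⟨S', h'⟩ => ⟨S' * S, h.mul h'⟩
  smul_mem' := fun c _T ⟨S, h⟩ => ⟨star c • S, h.smul c⟩

/-- The star (adjoint) operation on `adjAlg`. -/
def starOp (T : adjAlg X) : adjAlg X :=
  ⟨T.2.choose, T.1, T.2.choose_spec.symm⟩

lemma starOp_pair (T : adjAlg X) : AdjPair X T.1 (starOp X T).1 := T.2.choose_spec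

lemma starOp_eq {T : adjAlg X} {S} (h : AdjPair X T.1 S) : (starOp X T).1 = S :=
  (starOp_pair X T).unique h

noncomputable instance adjAlgStarRing : StarRing (adjAlg X) where
  star := starOp X
  star_involutive T := Subtype.ext <| starOp_eq X (starOp_pair X T).symm
  star_mul T U := Subtype.ext <| starOp_eq X ((starOp_pair X T).mul (starOp_pair X U))
  star_add T U := Subtype.ext <| starOp_eq X ((starOp_pair X T).add (starOp_pair X U))

lemma adj_star_pair (T : adjAlg X) : AdjPair X T.1 (star T).1 := starOp_pair X T

lemma adj_star_eq {T : adjAlg X} {S} (h : AdjPair X T.1 S) : (star T).1 = S :=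
  starOp_eq X h

instance adjAlgStarModule : StarModule ℂ (adjAlg X) where
  star_smul c T := Subtype.ext <| adj_star_eq X ((adj_star_pair X T).smul c)

lemma adjAlg_norm_def (T : adjAlg X) : ‖T‖ = ‖T.1‖ := rfl

noncomputable instance adjAlgCStarRing : CStarRing (adjAlg X) where
  norm_mul_self_le T := by
    set S : X.carrier →L[ℂ] X.carrier := (star T).1 with hS
    have hpair : AdjPair X T.1 S := adj_star_pair X T
    have hM : (0 : ℝ) ≤ ‖(star T * T).1‖ := norm_nonneg _
    have key : ∀ x : X.carrier, ‖T.1 x‖ ≤ Real.sqrt ‖(star T * T).1‖ * ‖x‖ := by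
      intro x
      have h1 : ‖T.1 x‖ * ‖T.1 x‖ = ‖X.inn (T.1 x) (T.1 x)‖ := X.norm_mul_self_eq_inn _
      have h2 : X.inn (T.1 x) (T.1 x) = X.inn x (S (T.1 x)) := hpair x (T.1 x)
      have h3 : ‖X.inn x (S (T.1 x))‖ ≤ ‖x‖ * ‖(star T * T).1 x‖ := by
        have : (star T * T).1 x = S (T.1 x) := rfl
        rw [this]; exact X.norm_inn_le x _
      have h4 : ‖(star T * T).1 x‖ ≤ ‖(star T * T).1‖ * ‖x‖ :=
        ContinuousLinearMap.le_opNorm _ x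
      have h5 : ‖T.1 x‖ * ‖T.1 x‖ ≤ ‖(star T * T).1‖ * (‖x‖ * ‖x‖) := by
        rw [h1, h2]
        calc ‖X.inn x (S (T.1 x))‖ ≤ ‖x‖ * ‖(star T * T).1 x‖ := h3
          _ ≤ ‖x‖ * (‖(star T * T).1‖ * ‖x‖) :=
              mul_le_mul_of_nonneg_left h4 (norm_nonneg x)
          _ = ‖(star T * T).1‖ * (‖x‖ * ‖x‖) := by ring
      calc ‖T.1 x‖ = Real.sqrt (‖T.1 x‖ * ‖T.1 x‖) := (Real.sqrt_mul_self (norm_nonneg _)).symm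
        _ ≤ Real.sqrt (‖(star T * T).1‖ * (‖x‖ * ‖x‖)) := Real.sqrt_le_sqrt h5
        _ = Real.sqrt ‖(star T * T).1‖ * ‖x‖ := by
            rw [Real.sqrt_mul hM, Real.sqrt_mul_self (norm_nonneg x)]
    have hT : ‖T.1‖ ≤ Real.sqrt ‖(star T * T).1‖ :=
      ContinuousLinearMap.opNorm_le_bound _ (Real.sqrt_nonneg _) key
    calc ‖T‖ * ‖T‖ = ‖T.1‖ * ‖T.1‖ := rfl
      _ ≤ Real.sqrt ‖(star T * T).1‖ * Real.sqrt ‖(star T * T).1‖ := by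
          have := norm_nonneg T.1; nlinarith
      _ = ‖(star T * T).1‖ := Real.mul_self_sqrt hM
      _ = ‖star T * T‖ := rfl

lemma tendsto_inn_left {u : ℕ → X.carrier} {w : X.carrier}
    (h : Filter.Tendsto u Filter.atTop (nhds w)) (y : X.carrier) :
    Filter.Tendsto (fun n => X.inn (u n) y) Filter.atTop (nhds (X.inn w y)) := by
  rw [tendsto_iff_norm_sub_tendsto_zero]
  have hb : Filter.Tendsto (fun n => ‖u n - w‖ * ‖y‖) Filter.atTop (nhds 0) := by
    simpa using (tendsto_iff_norm_sub_tendsto_zero.mp h).mul_const ‖y‖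
  refine squeeze_zero (fun n => norm_nonneg _) (fun n => ?_) hb
  rw [← X.inn_sub_left]
  exact X.norm_inn_le _ _

lemma tendsto_inn_right {u : ℕ → X.carrier} {w : X.carrier}
    (h : Filter.Tendsto u Filter.atTop (nhds w)) (y : X.carrier) :
    Filter.Tendsto (fun n => X.inn y (u n)) Filter.atTop (nhds (X.inn y w)) := by
  rw [tendsto_iff_norm_sub_tendsto_zero]
  have hb : Filter.Tendsto (fun n => ‖y‖ * ‖u n - w‖) Filter.atTop (nhds 0) := by
    simpa using (tendsto_iff_norm_sub_tendsto_zero.mp h).const_mul ‖y‖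
  refine squeeze_zero (fun n => norm_nonneg _) (fun n => ?_) hb
  rw [← X.inn_sub_right]
  exact X.norm_inn_le _ _

lemma isClosed_adjAlg : IsClosed ((adjAlg X : Set (X.carrier →L[ℂ] X.carrier))) := by
  refine IsSeqClosed.isClosed ?_
  intro f T hf hlim
  choose S hS using hf
  have hcau : CauchySeq f := hlim.cauchySeq
  have hcauS : CauchySeq S := by
    rw [Metric.cauchySeq_iff] at hcau ⊢
    intro ε hε
    obtain ⟨N, hN⟩ := hcau ε hε
    refine ⟨N, fun n hn m hm => ?_⟩
    have h1 : ‖S n - S m‖ ≤ ‖f n - f m‖ := ((hS n).sub (hS m)).norm_le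
    calc dist (S n) (S m) = ‖S n - S m‖ := dist_eq_norm _ _
      _ ≤ ‖f n - f m‖ := h1
      _ = dist (f n) (f m) := (dist_eq_norm _ _).symm
      _ < ε := hN n hn m hm
  obtain ⟨Slim, hSlim⟩ := cauchySeq_tendsto_of_complete hcauS
  refine ⟨Slim, fun x y => ?_⟩
  have hfx : Filter.Tendsto (fun n => f n x) Filter.atTop (nhds (T x)) :=
    ((ContinuousLinearMap.apply ℂ X.carrier x).continuous.tendsto T).comp hlim
  have hSy : Filter.Tendsto (fun n => S n y) Filter.atTop (nhds (Slim y)) :=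
    ((ContinuousLinearMap.apply ℂ X.carrier y).continuous.tendsto Slim).comp hSlim
  have h1 : Filter.Tendsto (fun n => X.inn (f n x) y) Filter.atTop (nhds (X.inn (T x) y)) :=
    tendsto_inn_left X hfx y
  have h2 : Filter.Tendsto (fun n => X.inn x (S n y)) Filter.atTop (nhds (X.inn x (Slim y))) :=
    tendsto_inn_right X hSy x
  have heq : (fun n => X.inn (f n x) y) = fun n => X.inn x (S n y) :=
    funext fun n => hS n x y
  exact tendsto_nhds_unique (heq ▸ h1) h2

instance adjAlgComplete : CompleteSpace (adjAlg X) :=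
  (isClosed_adjAlg X).completeSpace_coe

noncomputable instance adjAlgCStar : NonUnitalCStarAlgebra (adjAlg X) where
  norm_smul_le c T := norm_smul_le c T.1

end Adjointable

section CompactsRep

variable {X : Corr A} (𝒦 : Compacts X)

lemma act_zero_right (k : 𝒦.K.carrier) : 𝒦.act k 0 = 0 :=
  eq_zero_of_self_eq_add <| by
    conv_lhs => rw [show (0 : X.carrier) = 0 + 0 by simp, 𝒦.act_add]

lemma zero_act (x : X.carrier) : 𝒦.act 0 x = 0 :=
  eq_zero_of_self_eq_add <| by
    conv_lhs => rw [show (0 : 𝒦.K.carrier) = 0 + 0 by simp, 𝒦.add_act]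

lemma neg_act (k : 𝒦.K.carrier) (x : X.carrier) : 𝒦.act (-k) x = -(𝒦.act k x) := by
  have h : 𝒦.act k x + 𝒦.act (-k) x = 0 := by
    rw [← 𝒦.add_act]; simp [zero_act]
  linear_combination (norm := abel) h

lemma sub_act (k l : 𝒦.K.carrier) (x : X.carrier) :
    𝒦.act (k - l) x = 𝒦.act k x - 𝒦.act l x := by
  rw [sub_eq_add_neg, 𝒦.add_act, neg_act, sub_eq_add_neg]

/-- `𝒦.act k` as a continuous linear map, via the closed graph theorem. -/
noncomputable def actCLM (k : 𝒦.K.carrier) : X.carrier →L[ℂ] X.carrier :=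
  ContinuousLinearMap.ofSeqClosedGraph (g :=
    { toFun := 𝒦.act k
      map_add' := 𝒦.act_add k
      map_smul' := fun c x => by simpa using 𝒦.act_csmul k c x })
    (by
      intro u x y hu hgu
      have key : ∀ z : X.carrier, X.inn z (y - 𝒦.act k x) = 0 := by
        intro z
        have h1 : ∀ n, X.inn z (𝒦.act k (u n))
            = star (X.inn (u n) (𝒦.act (star k) z)) := fun n => by
          rw [← 𝒦.act_adjoint, X.inn_star]
        have h2 : Filter.Tendsto (fun n => X.inn z (𝒦.act k (u n)))
            Filter.atTop (nhds (X.inn z y)) := tendsto_inn_right X hgu z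
        have h3 : Filter.Tendsto (fun n => star (X.inn (u n) (𝒦.act (star k) z)))
            Filter.atTop (nhds (star (X.inn x (𝒦.act (star k) z)))) :=
          (continuous_star.tendsto _).comp (tendsto_inn_left X hu _)
        have h4 : X.inn z y = star (X.inn x (𝒦.act (star k) z)) :=
          tendsto_nhds_unique (by simpa only [h1] using h2) h3
        rw [X.inn_sub_right, h4, ← 𝒦.act_adjoint, X.inn_star, sub_self]
      have h0 : y - 𝒦.act k x = 0 := X.eq_zero_of_inn_self _ (key _)
      exact sub_eq_zero.mp h0)

lemma actCLM_apply (k : 𝒦.K.carrier) (x : X.carrier) : actCLM 𝒦 k x = 𝒦.act k x := rfl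

lemma actCLM_mem_adjAlg (k : 𝒦.K.carrier) : actCLM 𝒦 k ∈ adjAlg X :=
  ⟨actCLM 𝒦 (star k), fun x y => 𝒦.act_adjoint k x y⟩

/-- The canonical embedding of `𝒦.K` into the adjointable operators. -/
noncomputable def actHom : 𝒦.K.carrier →⋆ₙₐ[ℂ] adjAlg X where
  toFun k := ⟨actCLM 𝒦 k, actCLM_mem_adjAlg 𝒦 k⟩
  map_add' k l := Subtype.ext <| ContinuousLinearMap.ext fun x => 𝒦.add_act k l x
  map_smul' c k := Subtype.ext <| ContinuousLinearMap.ext fun x => 𝒦.csmul_act c k x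
  map_zero' := Subtype.ext <| ContinuousLinearMap.ext fun x => zero_act 𝒦 x
  map_mul' k l := Subtype.ext <| ContinuousLinearMap.ext fun x => 𝒦.act_mul k l x
  map_star' k := by
    refine (Subtype.ext ?_).symm
    exact adj_star_eq X (fun x y => 𝒦.act_adjoint k x y)

lemma actHom_injective : Function.Injective (actHom 𝒦) := by
  intro k l h
  have h0 : ∀ x, 𝒦.act (k - l) x = 0 := fun x => by
    rw [sub_act]
    have : actCLM 𝒦 k x = actCLM 𝒦 l x := by
      have h' : (actHom 𝒦 k).1 = (actHom 𝒦 l).1 := congrArg Subtype.val h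
      exact congrFun (congrArg (fun T : X.carrier →L[ℂ] X.carrier => ⇑T) h') x
    rw [actCLM_apply, actCLM_apply] at this
    rw [this, sub_self]
  have := 𝒦.act_injective _ h0
  exact sub_eq_zero.mp this

lemma actCLM_norm (k : 𝒦.K.carrier) : ‖actCLM 𝒦 k‖ = ‖k‖ :=
  NonUnitalStarAlgHom.norm_map (actHom 𝒦) (actHom_injective 𝒦) k

/-- The key fact: an operator approximable in operator norm by compacts is compact. -/
lemma exists_compact_of_approx (L : X.carrier →L[ℂ] X.carrier)
    (h : ∀ ε > (0:ℝ), ∃ k, ∀ x, ‖L x - 𝒦.act k x‖ ≤ ε * ‖x‖) :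
    ∃ k, ∀ x, 𝒦.act k x = L x := by
  have hiso : Isometry (fun k => actCLM 𝒦 k) := by
    refine Isometry.of_dist_eq fun k l => ?_
    have h1 : actCLM 𝒦 k - actCLM 𝒦 l = actCLM 𝒦 (k - l) := by
      refine ContinuousLinearMap.ext fun x => ?_
      rw [ContinuousLinearMap.sub_apply, actCLM_apply, actCLM_apply, actCLM_apply, sub_act]
    rw [dist_eq_norm, dist_eq_norm, h1, actCLM_norm]
  have hclosed : IsClosed (Set.range (fun k => actCLM 𝒦 k)) :=
    hiso.isClosedEmbedding.isClosed_range
  have hmem : L ∈ closure (Set.range (fun k => actCLM 𝒦 k)) := by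
    rw [Metric.mem_closure_iff]
    intro ε hε
    obtain ⟨k, hk⟩ := h (ε/2) (by positivity)
    refine ⟨actCLM 𝒦 k, Set.mem_range_self k, ?_⟩
    have hle : ‖L - actCLM 𝒦 k‖ ≤ ε/2 :=
      ContinuousLinearMap.opNorm_le_bound _ (by positivity) fun x => by
        simpa [actCLM_apply] using hk x
    calc dist L (actCLM 𝒦 k) = ‖L - actCLM 𝒦 k‖ := dist_eq_norm _ _
      _ ≤ ε/2 := hle
      _ < ε := by linarith
  rw [hclosed.closure_eq] at hmem
  obtain ⟨k, hk⟩ := hmem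
  exact ⟨k, fun x => by rw [← hk, actCLM_apply]⟩

end CompactsRep

section ApproxUnit

variable (X : Corr A)

set_option maxHeartbeats 1000000 in
lemma exists_approx_unit (q' : X.carrier) {ε : ℝ} (hε : 0 < ε) :
    ∃ u : A.carrier, star u = u ∧ ‖q' - X.smulR q' u‖ ≤ ε := by
  set a : A.carrier := X.inn q' q' with ha_def
  have ha : IsSelfAdjoint a := X.inn_star q' q'
  set d : ℝ := ε ^ 2 with hd_def
  have hd : 0 < d := by positivity
  set f : ℝ → ℝ := fun t => t ^ 2 / (t ^ 2 + d ^ 2) with hf_def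
  have hden : ∀ t : ℝ, t ^ 2 + d ^ 2 ≠ 0 := fun t => by positivity
  have hfc : Continuous f := Continuous.div (by fun_prop) (by fun_prop) hden
  have hf0 : f 0 = 0 := by simp [hf_def]
  set u : A.carrier := cfcₙ f a with hu_def
  have hu : IsSelfAdjoint u := cfcₙ_predicate f a
  refine ⟨u, hu.star_eq, ?_⟩
  set w : X.carrier := X.smulR q' u with hw_def
  have e1 : X.inn q' w = a * u := X.inn_smulR q' q' u
  have e2 : X.inn w q' = u * a := by
    rw [← X.inn_star q' w, e1, star_mul, hu.star_eq, ha.star_eq]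
  have e3 : X.inn w w = u * a * u := by
    have h := X.inn_smulR w q' u
    rw [← hw_def] at h
    rw [h, e2]
  have key : X.inn (q' - w) (q' - w) = a - a * u - u * a + u * a * u := by
    rw [X.inn_sub_left, X.inn_sub_right, X.inn_sub_right, e1, e2, e3, ← ha_def]
    abel
  have hcf : ContinuousOn f (quasispectrum ℝ a) := hfc.continuousOn
  have c_id : ContinuousOn (fun t : ℝ => t) (quasispectrum ℝ a) := continuousOn_id
  have c2 : ContinuousOn (fun t => t * f t) (quasispectrum ℝ a) := c_id.mul hcf
  have c3 : ContinuousOn (fun t => f t * t) (quasispectrum ℝ a) := hcf.mul c_id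
  have c4 : ContinuousOn (fun t => f t * t * f t) (quasispectrum ℝ a) := c3.mul hcf
  have c5 : ContinuousOn (fun t => t - t * f t) (quasispectrum ℝ a) := c_id.sub c2
  have c6 : ContinuousOn (fun t => t - t * f t - f t * t) (quasispectrum ℝ a) := c5.sub c3
  have h2' : cfcₙ (fun t => t * f t) a = a * u := by
    rw [cfcₙ_mul (fun t : ℝ => t) f a c_id rfl hcf hf0, cfcₙ_id' ℝ a, ← hu_def]
  have h3' : cfcₙ (fun t => f t * t) a = u * a := by
    rw [cfcₙ_mul f (fun t : ℝ => t) a hcf hf0 c_id rfl, cfcₙ_id' ℝ a, ← hu_def]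
  have h4' : cfcₙ (fun t => f t * t * f t) a = u * a * u := by
    rw [cfcₙ_mul (fun t => f t * t) f a c3 (by simp [hf0]) hcf hf0, h3', ← hu_def]
  have hstep : cfcₙ (fun t => t - t * f t - f t * t + f t * t * f t) a
      = a - a * u - u * a + u * a * u := by
    rw [cfcₙ_add (fun t => t - t * f t - f t * t) (fun t => f t * t * f t) a c6
        (by simp [hf0]) c4 (by simp [hf0]),
      cfcₙ_sub (fun t => t - t * f t) (fun t => f t * t) a c5 (by simp [hf0]) c3
        (by simp [hf0]),
      cfcₙ_sub (fun t : ℝ => t) (fun t => t * f t) a c_id rfl c2 (by simp [hf0]),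
      cfcₙ_id' ℝ a, h2', h3', h4']
  have hbound : ‖cfcₙ (fun t => t - t * f t - f t * t + f t * t * f t) a‖ ≤ d / 2 := by
    refine norm_cfcₙ_le fun t _ht => ?_
    have h1 : (0:ℝ) < t ^ 2 + d ^ 2 := by positivity
    have hrw : t - t * f t - f t * t + f t * t * f t = t * (d ^ 2 / (t ^ 2 + d ^ 2)) ^ 2 := by
      simp only [hf_def]
      field_simp
      ring
    rw [Real.norm_eq_abs, hrw, abs_mul, abs_of_nonneg (sq_nonneg (d ^ 2 / (t ^ 2 + d ^ 2)))]
    have heq : |t| * (d ^ 2 / (t ^ 2 + d ^ 2)) ^ 2 = |t| * (d ^ 2) ^ 2 / (t ^ 2 + d ^ 2) ^ 2 := by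
      rw [div_pow]; ring
    rw [heq, div_le_iff₀ (by positivity : (0:ℝ) < (t ^ 2 + d ^ 2) ^ 2)]
    have h2 : 2 * |t| * d ≤ t ^ 2 + d ^ 2 := by
      nlinarith [sq_nonneg (|t| - d), sq_abs t, abs_nonneg t]
    have h4 := mul_le_mul_of_nonneg_left h2 h1.le
    have hnn : (0:ℝ) ≤ 2 * |t| * d := by positivity
    have h5 : 2 * |t| * d * d ^ 2 ≤ 2 * |t| * d * (t ^ 2 + d ^ 2) :=
      mul_le_mul_of_nonneg_left (by nlinarith [sq_nonneg t]) hnn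
    have h6 : 2 * |t| * d * d ^ 2 ≤ (t ^ 2 + d ^ 2) ^ 2 := by nlinarith [h4, h5]
    nlinarith [mul_le_mul_of_nonneg_left h6 (by positivity : (0:ℝ) ≤ d / 2)]
  have hnormle : ‖X.inn (q' - w) (q' - w)‖ ≤ d / 2 := by rw [key, ← hstep]; exact hbound
  have h1 : ‖q' - w‖ = Real.sqrt ‖X.inn (q' - w) (q' - w)‖ := X.norm_eq _
  rw [h1]
  calc Real.sqrt ‖X.inn (q' - w) (q' - w)‖ ≤ Real.sqrt (d / 2) := Real.sqrt_le_sqrt hnormle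
    _ ≤ Real.sqrt (ε ^ 2) := Real.sqrt_le_sqrt (by rw [hd_def]; linarith [sq_nonneg ε])
    _ = ε := Real.sqrt_sq hε.le

end ApproxUnit

private lemma div_bound {C δ t : ℝ} (hC : 0 ≤ C) (hδ : 0 < δ) (ht : 0 ≤ t) :
    C * (δ / (C + 1) * t) ≤ δ * t := by
  have hC1 : 0 < C + 1 := by linarith
  have h1 : C * (δ / (C + 1)) ≤ δ := by
    rw [mul_div_assoc', div_le_iff₀ hC1]
    nlinarith
  calc C * (δ / (C + 1) * t) = (C * (δ / (C + 1))) * t := by ring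
    _ ≤ δ * t := mul_le_mul_of_nonneg_right h1 ht

section Main

variable {X : Corr A} (𝒦 : Compacts X) (mA : MulAlg A) (mX : MulCorr X mA)

lemma ι_zero : mX.ι 0 = 0 := by
  have h := mX.ι_csmul 0 0
  simpa using h

lemma ι_neg (x : X.carrier) : mX.ι (-x) = -(mX.ι x) := by
  have h := mX.ι_csmul (-1 : ℂ) x
  rwa [neg_one_smul ℂ x, neg_one_smul ℂ (mX.ι x)] at h

lemma ι_sub (x y : X.carrier) : mX.ι (x - y) = mX.ι x - mX.ι y := by
  rw [sub_eq_add_neg, mX.ι_add, ι_neg, sub_eq_add_neg]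

lemma norm_ι_sub (x y : X.carrier) : ‖mX.ι x - mX.ι y‖ = ‖x - y‖ := by
  rw [← ι_sub, mX.ι_isometry]

lemma mem_MA_ι (x : X.carrier) : mX.ι x ∈ mX.MA := by
  rintro c ⟨a, rfl⟩
  exact ⟨⟨X.lact a x, (mX.ι_lact a x).symm⟩, ⟨X.smulR x a, (mX.ι_smulR x a).symm⟩⟩

lemma lact_ι_ann (c : A.carrier) (hc : ∀ x, X.lact c x = 0) :
    ∀ z ∈ mX.MA, mX.MX.lact (mA.ι c) z = 0 := by
  intro z hz
  refine mX.essential _ 0 fun a => ?_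
  obtain ⟨x₀, hx₀⟩ := (hz (mA.ι a) ⟨a, rfl⟩).2
  rw [mX.MX.zero_smulR, ← mX.MX.lact_smulR, ← hx₀, mX.ι_lact, hc, ι_zero]

lemma spanL (a : A.carrier) (T' : mX.MX.carrier →L[ℂ] mX.MX.carrier)
    (hT' : T' ∈ Submodule.span ℂ
      {T0 | ∃ p ∈ mX.MA, ∃ q ∈ mX.MA, T0 = mX.MX.rankOne p q}) :
    ∀ δ > (0:ℝ), ∃ k : 𝒦.K.carrier, ∀ x : X.carrier,
      ‖T' (mX.ι (X.lact a x)) - mX.ι (𝒦.act k x)‖ ≤ δ * ‖x‖ := by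
  induction hT' using Submodule.span_induction with
  | mem T0 hT0 =>
    obtain ⟨p, hp, q, hq, rfl⟩ := hT0
    intro δ hδ
    obtain ⟨q', hq'⟩ := (hq (mA.ι (star a)) ⟨star a, rfl⟩).1
    have hδ' : (0:ℝ) < δ / (‖p‖ + 1) := by positivity
    obtain ⟨u, hu_star, hu⟩ := exists_approx_unit X q' hδ'
    obtain ⟨y, hy⟩ := (hp (mA.ι u) ⟨u, rfl⟩).2
    refine ⟨𝒦.θ y q', fun x => ?_⟩
    have keyA : mX.MX.inn q (mX.ι (X.lact a x)) = mA.ι (X.inn q' x) := by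
      rw [show mX.ι (X.lact a x) = mX.MX.lact (mA.ι a) (mX.ι x) from (mX.ι_lact a x).symm]
      have h2 := mX.MX.lact_adjoint (star (mA.ι a)) q (mX.ι x)
      rw [star_star] at h2
      rw [← h2, show star (mA.ι a) = mA.ι (star a) from (map_star mA.ι a).symm, ← hq', mX.ι_inn]
    have keyB : mX.ι (𝒦.act (𝒦.θ y q') x) = mX.MX.smulR p (mA.ι (u * X.inn q' x)) := by
      rw [𝒦.θ_apply, ← mX.ι_smulR, hy, mX.MX.smulR_mul, ← map_mul]
    have keyC : X.inn (X.smulR q' u) x = u * X.inn q' x := by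
      calc X.inn (X.smulR q' u) x = star (X.inn x (X.smulR q' u)) := (X.inn_star _ _).symm
        _ = star (X.inn x q' * u) := by rw [X.inn_smulR]
        _ = star u * star (X.inn x q') := star_mul _ _
        _ = u * X.inn q' x := by rw [hu_star, X.inn_star]
    have keyD : mX.MX.rankOne p q (mX.ι (X.lact a x)) - mX.ι (𝒦.act (𝒦.θ y q') x)
        = mX.MX.smulR p (mA.ι (X.inn (q' - X.smulR q' u) x)) := by
      rw [mX.MX.rankOne_apply, keyA, keyB, ← mX.MX.smulR_sub, ← map_sub,
        X.inn_sub_left, keyC]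
    rw [keyD]
    calc ‖mX.MX.smulR p (mA.ι (X.inn (q' - X.smulR q' u) x))‖
        ≤ ‖p‖ * ‖mA.ι (X.inn (q' - X.smulR q' u) x)‖ := mX.MX.norm_smulR_le _ _
      _ = ‖p‖ * ‖X.inn (q' - X.smulR q' u) x‖ := by rw [mA.isometry]
      _ ≤ ‖p‖ * (‖q' - X.smulR q' u‖ * ‖x‖) :=
          mul_le_mul_of_nonneg_left (X.norm_inn_le _ _) (norm_nonneg p)
      _ ≤ ‖p‖ * (δ / (‖p‖ + 1) * ‖x‖) := by
          refine mul_le_mul_of_nonneg_left ?_ (norm_nonneg p)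
          exact mul_le_mul_of_nonneg_right hu (norm_nonneg x)
      _ ≤ δ * ‖x‖ := div_bound (norm_nonneg p) hδ (norm_nonneg x)
  | zero =>
    intro δ hδ
    refine ⟨0, fun x => ?_⟩
    rw [zero_act, ι_zero]
    simpa using by positivity
  | add T1 T2 _ _ ih1 ih2 =>
    intro δ hδ
    obtain ⟨k1, hk1⟩ := ih1 (δ/2) (by positivity)
    obtain ⟨k2, hk2⟩ := ih2 (δ/2) (by positivity)
    refine ⟨k1 + k2, fun x => ?_⟩
    have he : (T1 + T2) (mX.ι (X.lact a x)) - mX.ι (𝒦.act (k1 + k2) x)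
        = (T1 (mX.ι (X.lact a x)) - mX.ι (𝒦.act k1 x))
          + (T2 (mX.ι (X.lact a x)) - mX.ι (𝒦.act k2 x)) := by
      rw [ContinuousLinearMap.add_apply, 𝒦.add_act, mX.ι_add]
      abel
    rw [he]
    calc ‖_ + _‖ ≤ ‖T1 (mX.ι (X.lact a x)) - mX.ι (𝒦.act k1 x)‖
          + ‖T2 (mX.ι (X.lact a x)) - mX.ι (𝒦.act k2 x)‖ := norm_add_le _ _
      _ ≤ δ/2 * ‖x‖ + δ/2 * ‖x‖ := add_le_add (hk1 x) (hk2 x)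
      _ = δ * ‖x‖ := by ring
  | smul c T1 _ ih =>
    intro δ hδ
    obtain ⟨k, hk⟩ := ih (δ/(‖c‖+1)) (by positivity)
    refine ⟨c • k, fun x => ?_⟩
    have he : (c • T1) (mX.ι (X.lact a x)) - mX.ι (𝒦.act (c • k) x)
        = c • (T1 (mX.ι (X.lact a x)) - mX.ι (𝒦.act k x)) := by
      rw [ContinuousLinearMap.smul_apply, 𝒦.csmul_act, mX.ι_csmul, smul_sub]
    rw [he, norm_smul]
    calc ‖c‖ * ‖T1 (mX.ι (X.lact a x)) - mX.ι (𝒦.act k x)‖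
        ≤ ‖c‖ * (δ/(‖c‖+1) * ‖x‖) := mul_le_mul_of_nonneg_left (hk x) (norm_nonneg c)
      _ ≤ δ * ‖x‖ := div_bound (norm_nonneg c) hδ (norm_nonneg x)

lemma spanR (a : A.carrier) (T' : mX.MX.carrier →L[ℂ] mX.MX.carrier)
    (hT' : T' ∈ Submodule.span ℂ
      {T0 | ∃ p ∈ mX.MA, ∃ q ∈ mX.MA, T0 = mX.MX.rankOne p q}) :
    ∀ δ > (0:ℝ), ∃ k : 𝒦.K.carrier, ∀ x : X.carrier,
      ‖mX.MX.lact (mA.ι a) (T' (mX.ι x)) - mX.ι (𝒦.act k x)‖ ≤ δ * ‖x‖ := by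
  induction hT' using Submodule.span_induction with
  | mem T0 hT0 =>
    obtain ⟨p, hp, q, hq, rfl⟩ := hT0
    intro δ hδ
    obtain ⟨p₂, hp₂⟩ := (hp (mA.ι a) ⟨a, rfl⟩).1
    have hδ' : (0:ℝ) < δ / (‖q‖ + 1) := by positivity
    obtain ⟨u, hu_star, hu⟩ := exists_approx_unit X p₂ hδ'
    obtain ⟨q₃, hq₃⟩ := (hq (mA.ι u) ⟨u, rfl⟩).2
    refine ⟨𝒦.θ p₂ q₃, fun x => ?_⟩
    have keyA : mX.MX.lact (mA.ι a) (mX.MX.rankOne p q (mX.ι x))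
        = mX.MX.smulR (mX.ι p₂) (mX.MX.inn q (mX.ι x)) := by
      rw [mX.MX.rankOne_apply, mX.MX.lact_smulR, hp₂]
    have keyB : mA.ι u * mX.MX.inn q (mX.ι x) = mA.ι (X.inn q₃ x) := by
      calc mA.ι u * mX.MX.inn q (mX.ι x)
          = mA.ι (star u) * star (mX.MX.inn (mX.ι x) q) := by
            rw [hu_star, mX.MX.inn_star]
        _ = star (mX.MX.inn (mX.ι x) q * mA.ι u) := by
            rw [star_mul, ← map_star]
        _ = star (mX.MX.inn (mX.ι x) (mX.MX.smulR q (mA.ι u))) := by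
            rw [mX.MX.inn_smulR]
        _ = mX.MX.inn (mX.MX.smulR q (mA.ι u)) (mX.ι x) := mX.MX.inn_star _ _
        _ = mX.MX.inn (mX.ι q₃) (mX.ι x) := by rw [hq₃]
        _ = mA.ι (X.inn q₃ x) := mX.ι_inn _ _
    have keyC : mX.ι (𝒦.act (𝒦.θ p₂ q₃) x)
        = mX.MX.smulR (mX.ι (X.smulR p₂ u)) (mX.MX.inn q (mX.ι x)) := by
      rw [𝒦.θ_apply, ← mX.ι_smulR, ← keyB, ← mX.MX.smulR_mul, mX.ι_smulR]
    have keyD : mX.MX.lact (mA.ι a) (mX.MX.rankOne p q (mX.ι x)) - mX.ι (𝒦.act (𝒦.θ p₂ q₃) x)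
        = mX.MX.smulR (mX.ι (p₂ - X.smulR p₂ u)) (mX.MX.inn q (mX.ι x)) := by
      rw [keyA, keyC, ← mX.MX.sub_smulR, ι_sub]
    rw [keyD]
    calc ‖mX.MX.smulR (mX.ι (p₂ - X.smulR p₂ u)) (mX.MX.inn q (mX.ι x))‖
        ≤ ‖mX.ι (p₂ - X.smulR p₂ u)‖ * ‖mX.MX.inn q (mX.ι x)‖ := mX.MX.norm_smulR_le _ _
      _ = ‖p₂ - X.smulR p₂ u‖ * ‖mX.MX.inn q (mX.ι x)‖ := by rw [mX.ι_isometry]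
      _ ≤ δ / (‖q‖ + 1) * (‖q‖ * ‖x‖) := by
          refine mul_le_mul hu ?_ (norm_nonneg _) hδ'.le
          calc ‖mX.MX.inn q (mX.ι x)‖ ≤ ‖q‖ * ‖mX.ι x‖ := mX.MX.norm_inn_le _ _
            _ = ‖q‖ * ‖x‖ := by rw [mX.ι_isometry]
      _ ≤ δ * ‖x‖ := by
          have := div_bound (norm_nonneg q) hδ (norm_nonneg x)
          calc δ / (‖q‖ + 1) * (‖q‖ * ‖x‖) = ‖q‖ * (δ / (‖q‖ + 1) * ‖x‖) := by ring
            _ ≤ δ * ‖x‖ := this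
  | zero =>
    intro δ hδ
    refine ⟨0, fun x => ?_⟩
    rw [zero_act, ι_zero, ContinuousLinearMap.zero_apply, mX.MX.lact_zero]
    simpa using by positivity
  | add T1 T2 _ _ ih1 ih2 =>
    intro δ hδ
    obtain ⟨k1, hk1⟩ := ih1 (δ/2) (by positivity)
    obtain ⟨k2, hk2⟩ := ih2 (δ/2) (by positivity)
    refine ⟨k1 + k2, fun x => ?_⟩
    have he : mX.MX.lact (mA.ι a) ((T1 + T2) (mX.ι x)) - mX.ι (𝒦.act (k1 + k2) x)
        = (mX.MX.lact (mA.ι a) (T1 (mX.ι x)) - mX.ι (𝒦.act k1 x))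
          + (mX.MX.lact (mA.ι a) (T2 (mX.ι x)) - mX.ι (𝒦.act k2 x)) := by
      rw [ContinuousLinearMap.add_apply, mX.MX.lact_add, 𝒦.add_act, mX.ι_add]
      abel
    rw [he]
    calc ‖_ + _‖ ≤ ‖mX.MX.lact (mA.ι a) (T1 (mX.ι x)) - mX.ι (𝒦.act k1 x)‖
          + ‖mX.MX.lact (mA.ι a) (T2 (mX.ι x)) - mX.ι (𝒦.act k2 x)‖ := norm_add_le _ _
      _ ≤ δ/2 * ‖x‖ + δ/2 * ‖x‖ := add_le_add (hk1 x) (hk2 x)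
      _ = δ * ‖x‖ := by ring
  | smul c T1 _ ih =>
    intro δ hδ
    obtain ⟨k, hk⟩ := ih (δ/(‖c‖+1)) (by positivity)
    refine ⟨c • k, fun x => ?_⟩
    have he : mX.MX.lact (mA.ι a) ((c • T1) (mX.ι x)) - mX.ι (𝒦.act (c • k) x)
        = c • (mX.MX.lact (mA.ι a) (T1 (mX.ι x)) - mX.ι (𝒦.act k x)) := by
      rw [ContinuousLinearMap.smul_apply, mX.MX.lact_csmul, 𝒦.csmul_act, mX.ι_csmul, smul_sub]
    rw [he, norm_smul]
    calc ‖c‖ * ‖mX.MX.lact (mA.ι a) (T1 (mX.ι x)) - mX.ι (𝒦.act k x)‖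
        ≤ ‖c‖ * (δ/(‖c‖+1) * ‖x‖) := mul_le_mul_of_nonneg_left (hk x) (norm_nonneg c)
      _ ≤ δ * ‖x‖ := div_bound (norm_nonneg c) hδ (norm_nonneg x)

lemma approxL {m : mA.M.carrier} {T : mX.MX.carrier →L[ℂ] mX.MX.carrier}
    (hT : T ∈ mX.MX.KSet mX.MA) (hTm : ∀ z ∈ mX.MA, mX.MX.lact m z = T z)
    (a b : A.carrier) (hb : m * mA.ι a = mA.ι b) :
    ∃ k, ∀ x, 𝒦.act k x = X.lact b x := by
  set L : X.carrier →L[ℂ] X.carrier := LinearMap.mkContinuous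
    { toFun := X.lact b
      map_add' := X.lact_add b
      map_smul' := fun c x => by simpa using X.lact_csmul b c x } ‖b‖ (X.norm_lact_le b)
    with hLdef
  have hLapp : ∀ x, L x = X.lact b x := fun x => rfl
  have hclose : ∀ ε > (0:ℝ), ∃ k, ∀ x, ‖L x - 𝒦.act k x‖ ≤ ε * ‖x‖ := by
    intro ε hε
    have keyb : ∀ x, mX.ι (X.lact b x) = T (mX.ι (X.lact a x)) := by
      intro x
      calc mX.ι (X.lact b x) = mX.MX.lact (mA.ι b) (mX.ι x) := (mX.ι_lact b x).symm
        _ = mX.MX.lact (m * mA.ι a) (mX.ι x) := by rw [hb]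
        _ = mX.MX.lact m (mX.MX.lact (mA.ι a) (mX.ι x)) := mX.MX.lact_mul m (mA.ι a) (mX.ι x)
        _ = mX.MX.lact m (mX.ι (X.lact a x)) := by rw [mX.ι_lact]
        _ = T (mX.ι (X.lact a x)) := hTm _ (mem_MA_ι mA mX (X.lact a x))
    have hT2 := hT
    rw [Corr.KSet, Metric.mem_closure_iff] at hT2
    obtain ⟨T', hT'mem, hT'close⟩ := hT2 (ε/(2*(‖a‖+1))) (by positivity)
    obtain ⟨k, hk⟩ := spanL 𝒦 mA mX a T' hT'mem (ε/2) (by positivity)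
    refine ⟨k, fun x => ?_⟩
    have h0 : ‖L x - 𝒦.act k x‖ = ‖T (mX.ι (X.lact a x)) - mX.ι (𝒦.act k x)‖ := by
      rw [hLapp, ← norm_ι_sub mA mX, keyb x]
    rw [h0]
    have hsplit : T (mX.ι (X.lact a x)) - mX.ι (𝒦.act k x)
        = (T - T') (mX.ι (X.lact a x)) + (T' (mX.ι (X.lact a x)) - mX.ι (𝒦.act k x)) := by
      rw [ContinuousLinearMap.sub_apply]; abel
    rw [hsplit]
    have hdist : ‖T - T'‖ ≤ ε/(2*(‖a‖+1)) := by
      rw [← dist_eq_norm]; exact le_of_lt hT'close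
    have hn1 : ‖(T - T') (mX.ι (X.lact a x))‖ ≤ ε/(2*(‖a‖+1)) * (‖a‖ * ‖x‖) := by
      calc ‖(T - T') (mX.ι (X.lact a x))‖ ≤ ‖T - T'‖ * ‖mX.ι (X.lact a x)‖ :=
            ContinuousLinearMap.le_opNorm _ _
        _ ≤ ε/(2*(‖a‖+1)) * (‖a‖ * ‖x‖) := by
            refine mul_le_mul hdist ?_ (norm_nonneg _) (by positivity)
            rw [mX.ι_isometry]; exact X.norm_lact_le a x
    have h1 : ε/(2*(‖a‖+1)) * ‖a‖ ≤ ε/2 := by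
      rw [div_mul_eq_mul_div, div_le_div_iff₀ (by positivity) (by positivity)]
      nlinarith [norm_nonneg a, hε.le]
    calc ‖_ + _‖ ≤ ‖(T - T') (mX.ι (X.lact a x))‖
          + ‖T' (mX.ι (X.lact a x)) - mX.ι (𝒦.act k x)‖ := norm_add_le _ _
      _ ≤ ε/(2*(‖a‖+1)) * (‖a‖ * ‖x‖) + ε/2 * ‖x‖ := add_le_add hn1 (hk x)
      _ ≤ ε/2 * ‖x‖ + ε/2 * ‖x‖ := by
          refine add_le_add ?_ le_rfl
          calc ε/(2*(‖a‖+1)) * (‖a‖ * ‖x‖) = (ε/(2*(‖a‖+1)) * ‖a‖) * ‖x‖ := by ring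
            _ ≤ ε/2 * ‖x‖ := mul_le_mul_of_nonneg_right h1 (norm_nonneg x)
      _ = ε * ‖x‖ := by ring
  obtain ⟨k, hk⟩ := exists_compact_of_approx 𝒦 L hclose
  exact ⟨k, fun x => (hk x).trans (hLapp x)⟩

lemma approxR {m : mA.M.carrier} {T : mX.MX.carrier →L[ℂ] mX.MX.carrier}
    (hT : T ∈ mX.MX.KSet mX.MA) (hTm : ∀ z ∈ mX.MA, mX.MX.lact m z = T z)
    (a b : A.carrier) (hb : mA.ι a * m = mA.ι b) :
    ∃ k, ∀ x, 𝒦.act k x = X.lact b x := by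
  set L : X.carrier →L[ℂ] X.carrier := LinearMap.mkContinuous
    { toFun := X.lact b
      map_add' := X.lact_add b
      map_smul' := fun c x => by simpa using X.lact_csmul b c x } ‖b‖ (X.norm_lact_le b)
    with hLdef
  have hLapp : ∀ x, L x = X.lact b x := fun x => rfl
  have hclose : ∀ ε > (0:ℝ), ∃ k, ∀ x, ‖L x - 𝒦.act k x‖ ≤ ε * ‖x‖ := by
    intro ε hε
    have keyb : ∀ x, mX.ι (X.lact b x) = mX.MX.lact (mA.ι a) (T (mX.ι x)) := by
      intro x
      calc mX.ι (X.lact b x) = mX.MX.lact (mA.ι b) (mX.ι x) := (mX.ι_lact b x).symm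
        _ = mX.MX.lact (mA.ι a * m) (mX.ι x) := by rw [hb]
        _ = mX.MX.lact (mA.ι a) (mX.MX.lact m (mX.ι x)) := mX.MX.lact_mul _ _ _
        _ = mX.MX.lact (mA.ι a) (T (mX.ι x)) := by rw [hTm _ (mem_MA_ι mA mX x)]
    have hT2 := hT
    rw [Corr.KSet, Metric.mem_closure_iff] at hT2
    obtain ⟨T', hT'mem, hT'close⟩ := hT2 (ε/(2*(‖mA.ι a‖+1))) (by positivity)
    obtain ⟨k, hk⟩ := spanR 𝒦 mA mX a T' hT'mem (ε/2) (by positivity)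
    refine ⟨k, fun x => ?_⟩
    have h0 : ‖L x - 𝒦.act k x‖
        = ‖mX.MX.lact (mA.ι a) (T (mX.ι x)) - mX.ι (𝒦.act k x)‖ := by
      rw [hLapp, ← norm_ι_sub mA mX, keyb x]
    rw [h0]
    have hsplit : mX.MX.lact (mA.ι a) (T (mX.ι x)) - mX.ι (𝒦.act k x)
        = mX.MX.lact (mA.ι a) ((T - T') (mX.ι x))
          + (mX.MX.lact (mA.ι a) (T' (mX.ι x)) - mX.ι (𝒦.act k x)) := by
      have hTT : T (mX.ι x) = (T - T') (mX.ι x) + T' (mX.ι x) := by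
        rw [ContinuousLinearMap.sub_apply]; abel
      rw [hTT, mX.MX.lact_add]
      abel
    rw [hsplit]
    have hdist : ‖T - T'‖ ≤ ε/(2*(‖mA.ι a‖+1)) := by
      rw [← dist_eq_norm]; exact le_of_lt hT'close
    have hn1 : ‖mX.MX.lact (mA.ι a) ((T - T') (mX.ι x))‖
        ≤ ‖mA.ι a‖ * (ε/(2*(‖mA.ι a‖+1)) * ‖x‖) := by
      calc ‖mX.MX.lact (mA.ι a) ((T - T') (mX.ι x))‖
          ≤ ‖mA.ι a‖ * ‖(T - T') (mX.ι x)‖ := mX.MX.norm_lact_le _ _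
        _ ≤ ‖mA.ι a‖ * (ε/(2*(‖mA.ι a‖+1)) * ‖x‖) := by
            refine mul_le_mul_of_nonneg_left ?_ (norm_nonneg _)
            calc ‖(T - T') (mX.ι x)‖ ≤ ‖T - T'‖ * ‖mX.ι x‖ :=
                  ContinuousLinearMap.le_opNorm _ _
              _ ≤ ε/(2*(‖mA.ι a‖+1)) * ‖x‖ := by
                  rw [mX.ι_isometry]
                  exact mul_le_mul_of_nonneg_right hdist (norm_nonneg x)
    have h1 : ‖mA.ι a‖ * (ε/(2*(‖mA.ι a‖+1)) * ‖x‖) ≤ ε/2 * ‖x‖ := by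
      have := div_bound (C := ‖mA.ι a‖) (δ := ε/2) (t := ‖x‖) (norm_nonneg _)
        (by positivity) (norm_nonneg x)
      calc ‖mA.ι a‖ * (ε/(2*(‖mA.ι a‖+1)) * ‖x‖)
          = ‖mA.ι a‖ * ((ε/2)/(‖mA.ι a‖+1) * ‖x‖) := by rw [div_div]
        _ ≤ ε/2 * ‖x‖ := this
    calc ‖_ + _‖ ≤ ‖mX.MX.lact (mA.ι a) ((T - T') (mX.ι x))‖
          + ‖mX.MX.lact (mA.ι a) (T' (mX.ι x)) - mX.ι (𝒦.act k x)‖ := norm_add_le _ _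
      _ ≤ ‖mA.ι a‖ * (ε/(2*(‖mA.ι a‖+1)) * ‖x‖) + ε/2 * ‖x‖ := add_le_add hn1 (hk x)
      _ ≤ ε/2 * ‖x‖ + ε/2 * ‖x‖ := add_le_add h1 le_rfl
      _ = ε * ‖x‖ := by ring
  obtain ⟨k, hk⟩ := exists_compact_of_approx 𝒦 L hclose
  exact ⟨k, fun x => (hk x).trans (hLapp x)⟩

end Main

end Statement13Aux

/-- Let `(X, A)` be a nondegenerate C*-correspondence.  Then the
Katsura ideal of the `A`-multiplier correspondence satisfies
`J_{M_A(X)} ⊆ M(A; J_X)`, the strict closure of `J_X` in `M(A)`. -/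
theorem multiplier_katsura_ideal_subset
    {A : CAlg.{u}} (X : Corr A) (𝒦 : Compacts X)
    (mA : MulAlg A) (mX : MulCorr X mA) :
    mX.MX.subKatsura mX.MA Set.univ ⊆ mA.MI (Jideal 𝒦) := by
  rintro m ⟨-, ⟨T, hT, hTm⟩, hann⟩
  refine ⟨fun a => ?_, fun a => ?_⟩
  · obtain ⟨b, hb⟩ := mA.ideal_left m a
    refine ⟨b, ⟨approxL 𝒦 mA mX hT hTm a b hb, ?_⟩, hb⟩
    intro c hc
    have h1 : ∀ x, X.lact (a * c) x = 0 := fun x => by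
      rw [X.lact_mul, hc, X.lact_zero]
    have h2 : m * mA.ι (a * c) = 0 :=
      hann (mA.ι (a * c)) (Set.mem_univ _) (lact_ι_ann mA mX (a * c) h1)
    have h3 : mA.ι (b * c) = mA.ι 0 := by
      calc mA.ι (b * c) = mA.ι b * mA.ι c := map_mul _ _ _
        _ = (m * mA.ι a) * mA.ι c := by rw [hb]
        _ = m * (mA.ι a * mA.ι c) := mul_assoc _ _ _
        _ = m * mA.ι (a * c) := by rw [← map_mul]
        _ = 0 := h2
        _ = mA.ι 0 := (map_zero _).symm
    exact mA.injective h3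
  · obtain ⟨b, hb⟩ := mA.ideal_right m a
    refine ⟨b, ⟨approxR 𝒦 mA mX hT hTm a b hb, ?_⟩, hb⟩
    intro c hc
    have h2 : m * mA.ι c = 0 :=
      hann (mA.ι c) (Set.mem_univ _) (lact_ι_ann mA mX c hc)
    have h3 : mA.ι (b * c) = mA.ι 0 := by
      calc mA.ι (b * c) = mA.ι b * mA.ι c := map_mul _ _ _
        _ = (mA.ι a * m) * mA.ι c := by rw [hb]
        _ = mA.ι a * (m * mA.ι c) := mul_assoc _ _ _
        _ = mA.ι a * 0 := by rw [h2]
        _ = 0 := mul_zero _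
        _ = mA.ι 0 := (map_zero _).symm
    exact mA.injective h3

end Paper
end
end
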